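/- arXiv:2402.02259 — 4 statements merged into one kernel-verified Lean document; each statement's English description precedes it below -/
import Mathlib

section
/- Let X be a subgaussian random variable and let A(t) = t²/2 − log E[e^{tX}]. If A(t) ≥ 0 for all t ∈ ℝ, then A satisfies the differential inequality A'(h)² ≤ 2 A(h) for all h ∈ ℝ. -/
open MeasureTheory ProbabilityTheory Filter Real

private lemma aux_abs_mul_exp_le (b s x : ℝ) (hs : |s| ≤ b) :
    |x * Real.exp (s * x)| ≤ Real.exp ((b + 1) * x) + Real.exp (-(b + 1) * x) := by
  have h1 : |x * Real.exp (s * x)| = |x| * Real.exp (s * x) := by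
    rw [abs_mul, abs_of_pos (Real.exp_pos _)]
  have h2 : |x| ≤ Real.exp |x| := by
    have := Real.add_one_le_exp |x|
    linarith [abs_nonneg x]
  have h3 : s * x ≤ b * |x| := by
    calc s * x ≤ |s * x| := le_abs_self _
    _ = |s| * |x| := abs_mul s x
    _ ≤ b * |x| := by
        have := abs_nonneg x
        nlinarith
  have h4 : |x| * Real.exp (s * x) ≤ Real.exp ((b + 1) * |x|) := by
    calc |x| * Real.exp (s * x) ≤ Real.exp |x| * Real.exp (b * |x|) :=
      mul_le_mul h2 (Real.exp_le_exp.2 h3) (Real.exp_pos _).le (Real.exp_nonneg _)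
    _ = Real.exp ((b + 1) * |x|) := by rw [← Real.exp_add]; ring_nf
  rw [h1]
  rcases abs_cases x with ⟨hx, _⟩ | ⟨hx, _⟩
  · have hxx : (b + 1) * |x| = (b + 1) * x := by rw [hx]
    rw [hxx] at h4
    exact h4.trans (le_add_of_nonneg_right (Real.exp_pos _).le)
  · have hx' : (b + 1) * |x| = -(b + 1) * x := by rw [hx]; ring
    rw [hx'] at h4
    exact h4.trans (le_add_of_nonneg_left (Real.exp_pos _).le)

/-- If `X` is subgaussian and `A(t) = t²/2 − log E[e^{tX}]` is nonnegative
everywhere, then `A'(h)² ≤ 2 A(h)` for all `h`. -/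
theorem renyi_clt_stmt_7
    {Ω : Type*} [MeasurableSpace Ω] (μ : Measure Ω) [IsProbabilityMeasure μ]
    (X : Ω → ℝ) (hX : Measurable X)
    (hsub : ∃ c > 0, Integrable (fun ω => Real.exp (c * (X ω) ^ 2)) μ)
    (A : ℝ → ℝ) (hA : A = fun t => t ^ 2 / 2 - Real.log (mgf X μ t))
    (hA0 : ∀ t : ℝ, 0 ≤ A t) :
    ∀ h : ℝ, (deriv A h) ^ 2 ≤ 2 * A h := by
  obtain ⟨c, hc, hint⟩ := hsub
  -- all exponential moments are finite
  have hexp_int : ∀ t : ℝ, Integrable (fun ω => Real.exp (t * X ω)) μ := by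
    intro t
    refine Integrable.mono' (hint.const_mul (Real.exp (t ^ 2 / (4 * c)))) ?_ ?_
    · exact (measurable_exp.comp (hX.const_mul t)).aestronglyMeasurable
    · refine ae_of_all _ fun ω => ?_
      rw [Real.norm_eq_abs, abs_of_pos (Real.exp_pos _), ← Real.exp_add]
      apply Real.exp_le_exp.2
      have h4c : (0:ℝ) < 4 * c := by linarith
      rw [div_add' _ _ _ h4c.ne', le_div_iff₀ h4c]
      nlinarith [sq_nonneg (t - 2 * c * X ω)]
  -- integrability of X * exp (t * X)
  have hXexp_int : ∀ t : ℝ, Integrable (fun ω => X ω * Real.exp (t * X ω)) μ := by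
    intro t
    have hbnd : Integrable
        (fun ω => Real.exp ((|t| + 1) * X ω) + Real.exp (-(|t| + 1) * X ω)) μ :=
      (hexp_int _).add (hexp_int _)
    refine Integrable.mono' hbnd
      ((hX.mul (measurable_exp.comp (hX.const_mul t))).aestronglyMeasurable) ?_
    refine ae_of_all _ fun ω => ?_
    rw [Real.norm_eq_abs]
    exact aux_abs_mul_exp_le |t| t (X ω) le_rfl
  -- derivative of the mgf
  have hLh_pos : ∀ t : ℝ, 0 < mgf X μ t := fun t => mgf_pos (hexp_int t)
  have hmgf_deriv : ∀ h : ℝ,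
      HasDerivAt (mgf X μ) (∫ ω, X ω * Real.exp (h * X ω) ∂μ) h := by
    intro h
    have key := hasDerivAt_integral_of_dominated_loc_of_deriv_le
      (F := fun t ω => Real.exp (t * X ω))
      (F' := fun t ω => X ω * Real.exp (t * X ω))
      (bound := fun ω => Real.exp ((|h| + 1 + 1) * X ω) + Real.exp (-(|h| + 1 + 1) * X ω))
      (x₀ := h) (μ := μ) (Metric.ball_mem_nhds h one_pos)
      (Eventually.of_forall fun t => (measurable_exp.comp (hX.const_mul t)).aestronglyMeasurable)
      (hexp_int h)
      ((hX.mul (measurable_exp.comp (hX.const_mul h))).aestronglyMeasurable)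
      ?_ ((hexp_int _).add (hexp_int _)) ?_
    · exact key.2
    · refine ae_of_all _ fun ω t ht => ?_
      rw [Real.norm_eq_abs]
      have hts : |t| ≤ |h| + 1 := by
        have h1 : dist t h < 1 := Metric.mem_ball.mp ht
        rw [Real.dist_eq] at h1
        calc |t| = |t - h + h| := by ring_nf
        _ ≤ |t - h| + |h| := abs_add_le _ _
        _ ≤ |h| + 1 := by linarith
      exact aux_abs_mul_exp_le (|h| + 1) t (X ω) hts
    · refine ae_of_all _ fun ω t _ => ?_
      have := (hasDerivAt_mul_const (X ω) (x := t)).exp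
      simpa [mul_comm] using this
  intro h
  -- notation
  set I : ℝ := ∫ ω, X ω * Real.exp (h * X ω) ∂μ with hI
  set d : ℝ := I / mgf X μ h with hd
  -- derivative of A
  have hK : HasDerivAt (fun t => Real.log (mgf X μ t)) d h := by
    rw [hd]
    exact (hmgf_deriv h).log (hLh_pos h).ne'
  have hAderiv : HasDerivAt A (h - d) h := by
    rw [hA]
    have h1 : HasDerivAt (fun t : ℝ => t ^ 2 / 2) h h := by
      have := (hasDerivAt_pow 2 h).div_const 2
      norm_num at this
      simpa using this
    exact h1.sub hK
  -- the tilted measure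
  set ν := μ.tilted (fun ω => h * X ω) with hν
  haveI : IsProbabilityMeasure ν := isProbabilityMeasure_tilted (hexp_int h)
  have htilt_int : ∀ g : Ω → ℝ, Integrable (fun ω => Real.exp (h * X ω) * g ω) μ →
      Integrable g ν := by
    intro g hg
    rw [hν, tilted_eq_withDensity_nnreal, integrable_withDensity_iff_integrable_smul₀]
    · simp only [NNReal.smul_def, NNReal.coe_mk, smul_eq_mul]
      refine (hg.div_const (∫ ω, Real.exp (h * X ω) ∂μ)).congr (ae_of_all _ fun ω => ?_)
      ring
    · rw [← aemeasurable_coe_nnreal_real_iff]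
      simp only [NNReal.coe_mk]
      exact ((measurable_exp.comp (hX.const_mul h)).div_const _).aemeasurable
  -- mean of X under the tilted measure
  have hmean : ∫ ω, X ω ∂ν = d := by
    rw [hν, integral_tilted]
    simp only [smul_eq_mul]
    have heq : ∀ ω, Real.exp (h * X ω) / (∫ ω, Real.exp (h * X ω) ∂μ) * X ω
        = (X ω * Real.exp (h * X ω)) / mgf X μ h := by
      intro ω
      rw [mgf]
      ring
    rw [integral_congr_ae (ae_of_all _ heq), integral_div]
  -- integrabilities under ν
  have hInt1 : Integrable X ν :=
    htilt_int X ((hXexp_int h).congr (ae_of_all _ fun ω => by ring))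
  have hInt2 : Integrable (fun ω => Real.exp ((d - h) * X ω)) ν := by
    refine htilt_int _ ((hexp_int d).congr (ae_of_all _ fun ω => ?_))
    show Real.exp (d * X ω) = Real.exp (h * X ω) * Real.exp ((d - h) * X ω)
    rw [← Real.exp_add]
    congr 1
    ring
  -- Jensen's inequality for the tilted measure
  have hjensen : Real.exp (∫ ω, (d - h) * X ω ∂ν) ≤ ∫ ω, Real.exp ((d - h) * X ω) ∂ν := by
    have := convexOn_exp.map_integral_le (μ := ν) (f := fun ω => (d - h) * X ω)
      continuous_exp.continuousOn isClosed_univ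
      (ae_of_all _ fun ω => Set.mem_univ _) (hInt1.const_mul (d - h)) ?_
    · exact this
    · exact hInt2
  -- compute the right-hand side
  have hexp_integral : ∫ ω, Real.exp ((d - h) * X ω) ∂ν = mgf X μ d / mgf X μ h := by
    rw [hν, integral_exp_tilted]
    congr 1
    refine integral_congr_ae (ae_of_all _ fun ω => ?_)
    simp only [Pi.add_apply]
    congr 1
    ring
  -- the left-hand side
  have hlhs : ∫ ω, (d - h) * X ω ∂ν = (d - h) * d := by
    rw [integral_const_mul, hmean]
  -- tangent line inequality for K = log mgf
  have htangent : Real.log (mgf X μ h) + (d - h) * d ≤ Real.log (mgf X μ d) := by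
    rw [hlhs, hexp_integral] at hjensen
    have hlog := Real.log_le_log (Real.exp_pos _) hjensen
    rw [Real.log_exp, Real.log_div (hLh_pos d).ne' (hLh_pos h).ne'] at hlog
    linarith
  -- finish by algebra
  have hAd := hA0 d
  rw [hA] at hAd
  simp only at hAd
  rw [hAderiv.deriv, hA]
  simp only
  nlinarith [htangent, hAd]
end

section
/- Let X be a random variable with E[X] = 0, Var(X) = 1, whose density p satisfies T_∞(p‖φ) < ∞, and which satisfies the separation condition: for every t₀ > 0, sup_{|t| ≥ t₀} e^{−t²/2} E[e^{tX}] < 1. Then for every τ₀ > 0 there exist constants A > 0 and δ ∈ (0,1) such that for every n ≥ 1, the density p_n of Z_n satisfies p_n(x) ≤ A δⁿ φ(x) for almost every x with |x| ≥ τ₀ √n. -/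
open MeasureTheory ProbabilityTheory Filter Real
open scoped ENNReal

/-- The standard normal density on `ℝ`. -/
noncomputable def stdGauss (x : ℝ) : ℝ := (Real.sqrt (2 * Real.pi))⁻¹ * Real.exp (-x ^ 2 / 2)

/-- `p` is a (Lebesgue) density of the random variable `X` defined on `(Ω, μ)`. -/
def HasDensityOn {Ω : Type*} [MeasurableSpace Ω] (μ : Measure Ω) (X : Ω → ℝ) (p : ℝ → ℝ) : Prop :=
  Measurable X ∧ Measurable p ∧ (∀ x, 0 ≤ p x) ∧
    Measure.map X μ = volume.withDensity (fun x => ENNReal.ofReal (p x))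

/-- The Tsallis distance of infinite order `T_∞(p‖φ) = ess sup_x (p(x) − φ(x))/φ(x)`,
with values in `[0, ∞]`. -/
noncomputable def Tinf (p : ℝ → ℝ) : ENNReal :=
  essSup (fun x => ENNReal.ofReal ((p x - stdGauss x) / stdGauss x)) volume

/-- The Rényi divergence of infinite order `D_∞(p‖φ) = ess sup_x log (p(x)/φ(x))`,
with values in `[0, ∞]`. -/
noncomputable def Dinf (p : ℝ → ℝ) : ENNReal :=
  essSup (fun x => ENNReal.ofReal (Real.log (p x / stdGauss x))) volume

/-- The normalized sum `Z_n = (X₁ + ⋯ + X_n)/√n`. -/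
noncomputable def normSum {Ω : Type*} (X : ℕ → Ω → ℝ) (n : ℕ) (ω : Ω) : ℝ :=
  (∑ k ∈ Finset.range n, X k ω) / Real.sqrt n

lemma stdGauss_pos (x : ℝ) : 0 < stdGauss x := by
  unfold stdGauss
  have h : 0 < Real.sqrt (2 * Real.pi) := Real.sqrt_pos.2 (by positivity)
  positivity

lemma tilt_bound (t v : ℝ) : Real.exp (-v ^ 2 / 2) ≤ Real.exp (t ^ 2 / 2) * Real.exp (-(t * v)) := by
  rw [← Real.exp_add]
  apply Real.exp_le_exp.2
  nlinarith [sq_nonneg (v - t)]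

lemma density_le_of_Tinf_ne_top {q : ℝ → ℝ} (hfin : Tinf q ≠ ⊤) :
    ∃ M : ℝ, 1 ≤ M ∧ ∀ᵐ v : ℝ, q v ≤ M * stdGauss v := by
  refine ⟨(Tinf q).toReal + 1, by linarith [ENNReal.toReal_nonneg (a := Tinf q)], ?_⟩
  filter_upwards [ENNReal.ae_le_essSup (fun x => ENNReal.ofReal ((q x - stdGauss x) / stdGauss x))]
    with v hv
  have hT : (0:ℝ) ≤ (Tinf q).toReal := ENNReal.toReal_nonneg
  have h1 : (q v - stdGauss v) / stdGauss v ≤ (Tinf q).toReal := by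
    have h2 : ENNReal.ofReal ((q v - stdGauss v) / stdGauss v)
        ≤ ENNReal.ofReal ((Tinf q).toReal) := by
      rw [ENNReal.ofReal_toReal hfin]; exact hv
    exact (ENNReal.ofReal_le_ofReal_iff hT).1 h2
  have hφ := stdGauss_pos v
  have h3 : q v - stdGauss v ≤ (Tinf q).toReal * stdGauss v := by
    rwa [div_le_iff₀ hφ] at h1
  nlinarith

lemma iIndepFun_ae_congr {Ω : Type*} [MeasurableSpace Ω] {μ : Measure Ω} {X Y : ℕ → Ω → ℝ}
    (h : ∀ i, X i =ᵐ[μ] Y i) (hX : iIndepFun X μ) :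
    iIndepFun Y μ := by
  rw [iIndepFun_iff_measure_inter_preimage_eq_mul] at hX ⊢
  intro S sets hsets
  have hall : ∀ᵐ ω ∂μ, ∀ i, X i ω = Y i ω := ae_all_iff.2 h
  have h1 : μ (⋂ i ∈ S, Y i ⁻¹' sets i) = μ (⋂ i ∈ S, X i ⁻¹' sets i) := by
    apply measure_congr
    rw [Filter.eventuallyEq_set]
    filter_upwards [hall] with ω hω
    have h' : ∀ i, Y i ω = X i ω := fun i => (hω i).symm
    simp only [Set.mem_iInter, Set.mem_preimage, h']
  have h2 : ∀ i ∈ S, μ (Y i ⁻¹' sets i) = μ (X i ⁻¹' sets i) := by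
    intro i _
    apply measure_congr
    rw [Filter.eventuallyEq_set]
    filter_upwards [hall] with ω hω
    simp only [Set.mem_preimage, hω i]
  rw [h1, hX S hsets]
  exact Finset.prod_congr rfl fun i hi => (h2 i hi).symm

noncomputable def gridT (τ₀ : ℝ) (n : ℕ) (k : ℤ) : ℝ :=
  if 0 ≤ k then τ₀ / 2 + (k : ℝ) / (2 * n) else -(τ₀ / 2) + ((k : ℝ) + 1) / (2 * n)

lemma gridT_spec (τ₀ : ℝ) (hτ : 0 < τ₀) (n : ℕ) (hn : 1 ≤ n) (u : ℝ) (hu : τ₀ ≤ |u|) :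
    ∃ k : ℤ, τ₀ / 2 ≤ |gridT τ₀ n k| ∧ |gridT τ₀ n k - u| ≤ 1 / (2 * n) := by
  have hn0 : (0:ℝ) < (n:ℝ) := by exact_mod_cast hn
  have hm : (0:ℝ) < 2 * n := by linarith
  rcases le_or_gt 0 u with hu0 | hu0
  · have huτ : τ₀ ≤ u := by rwa [abs_of_nonneg hu0] at hu
    set k := ⌊2 * (n:ℝ) * (u - τ₀ / 2)⌋ with hkdef
    have hknn : 0 ≤ k := Int.floor_nonneg.2 (by nlinarith)
    have hkR : (0:ℝ) ≤ (k:ℝ) := by exact_mod_cast hknn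
    have hfl : (k:ℝ) ≤ 2 * (n:ℝ) * (u - τ₀ / 2) := Int.floor_le _
    have hfl2 : 2 * (n:ℝ) * (u - τ₀ / 2) < (k:ℝ) + 1 := Int.lt_floor_add_one _
    have ht : gridT τ₀ n k = τ₀ / 2 + (k:ℝ) / (2 * n) := by rw [gridT, if_pos hknn]
    have h1 : (k:ℝ) / (2 * n) ≤ u - τ₀ / 2 := (div_le_iff₀ hm).2 (by linarith)
    have h2 : u - τ₀ / 2 < ((k:ℝ) + 1) / (2 * n) := (lt_div_iff₀ hm).2 (by linarith)
    have hdiv : ((k:ℝ) + 1) / (2 * n) = (k:ℝ) / (2 * n) + 1 / (2 * n) := add_div _ _ _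
    have hknonneg : 0 ≤ (k:ℝ) / (2 * n) := div_nonneg hkR hm.le
    refine ⟨k, ?_, ?_⟩
    · rw [ht, abs_of_nonneg (by linarith)]; linarith
    · rw [ht, abs_le]; rw [hdiv] at h2; constructor <;> linarith
  · have huτ : u ≤ -τ₀ := by rw [abs_of_neg hu0] at hu; linarith
    set k' := ⌊2 * (n:ℝ) * (-u - τ₀ / 2)⌋ with hkdef
    have hknn : 0 ≤ k' := Int.floor_nonneg.2 (by nlinarith)
    have hkR : (0:ℝ) ≤ (k':ℝ) := by exact_mod_cast hknn
    have hfl : (k':ℝ) ≤ 2 * (n:ℝ) * (-u - τ₀ / 2) := Int.floor_le _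
    have hfl2 : 2 * (n:ℝ) * (-u - τ₀ / 2) < (k':ℝ) + 1 := Int.lt_floor_add_one _
    have hneg : ¬ (0 ≤ -(k' + 1)) := by omega
    have ht : gridT τ₀ n (-(k' + 1)) = -(τ₀ / 2) - (k':ℝ) / (2 * n) := by
      rw [gridT, if_neg hneg]; push_cast; ring
    have h1 : (k':ℝ) / (2 * n) ≤ -u - τ₀ / 2 := (div_le_iff₀ hm).2 (by linarith)
    have h2 : -u - τ₀ / 2 < ((k':ℝ) + 1) / (2 * n) := (lt_div_iff₀ hm).2 (by linarith)
    have hdiv : ((k':ℝ) + 1) / (2 * n) = (k':ℝ) / (2 * n) + 1 / (2 * n) := add_div _ _ _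
    have hknonneg : 0 ≤ (k':ℝ) / (2 * n) := div_nonneg hkR hm.le
    refine ⟨-(k' + 1), ?_, ?_⟩
    · rw [ht, abs_of_nonpos (by linarith)]; linarith
    · rw [ht, abs_le]; rw [hdiv] at h2; constructor <;> linarith

lemma grow_bound {M δ₀ : ℝ} (hM : 1 ≤ M) (h0 : 0 < δ₀) (h1 : δ₀ < 1) :
    ∃ δ : ℝ, 0 < δ ∧ δ < 1 ∧ ∃ A : ℝ, 0 < A ∧
      ∀ n : ℕ, 1 ≤ n → M * Real.exp (1/8) * Real.sqrt n * δ₀ ^ (n - 1) ≤ A * δ ^ n := by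
  set δ : ℝ := Real.sqrt δ₀ with hδdef
  have hδpos : 0 < δ := Real.sqrt_pos.2 h0
  have hδlt : δ < 1 := by
    rw [hδdef, show (1:ℝ) = Real.sqrt 1 from (Real.sqrt_one).symm]
    exact Real.sqrt_lt_sqrt h0.le h1
  have hδsq : δ ^ 2 = δ₀ := Real.sq_sqrt h0.le
  have h1δ : 0 < 1 - δ := by linarith
  set A : ℝ := M * Real.exp (1/8) * ((1 - δ)⁻¹) ^ 2 / δ with hAdef
  have hApos : 0 < A := by
    apply div_pos _ hδpos
    exact mul_pos (mul_pos (by linarith) (Real.exp_pos _)) (pow_pos (inv_pos.2 h1δ) 2)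
  refine ⟨δ, hδpos, hδlt, A, hApos, ?_⟩
  intro n hn
  have hnR : (1:ℝ) ≤ (n:ℝ) := by exact_mod_cast hn
  have hsum : (n:ℝ) * δ ^ n ≤ δ / (1 - δ) ^ 2 := by
    have hgeo : HasSum (fun m : ℕ => (m:ℝ) * δ ^ m) (δ / (1 - δ) ^ 2) := by
      apply hasSum_coe_mul_geometric_of_norm_lt_one
      rw [Real.norm_eq_abs, abs_of_pos hδpos]; exact hδlt
    exact le_hasSum hgeo n (fun j _ => by positivity)
  have e1 : δ ^ (n - 1) * δ = δ ^ n := by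
    rw [← pow_succ, Nat.sub_add_cancel hn]
  have h2 : (n:ℝ) * δ ^ (n - 1) ≤ ((1 - δ)⁻¹) ^ 2 := by
    have hkey : (n:ℝ) * δ ^ (n - 1) * δ ≤ ((1 - δ)⁻¹) ^ 2 * δ := by
      rw [mul_assoc, e1]
      calc (n:ℝ) * δ ^ n ≤ δ / (1 - δ) ^ 2 := hsum
        _ = ((1 - δ)⁻¹) ^ 2 * δ := by rw [inv_pow]; field_simp
    exact le_of_mul_le_mul_right hkey hδpos
  have hsqrt : Real.sqrt n ≤ (n:ℝ) := by
    calc Real.sqrt n ≤ Real.sqrt ((n:ℝ) ^ 2) := Real.sqrt_le_sqrt (by nlinarith)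
      _ = (n:ℝ) := Real.sqrt_sq (by linarith)
  have e2 : δ₀ ^ (n - 1) = δ ^ (n - 1) * δ ^ (n - 1) := by
    rw [← hδsq, ← pow_mul, two_mul, pow_add]
  have hδpow : (0:ℝ) ≤ δ ^ (n - 1) := by positivity
  calc M * Real.exp (1/8) * Real.sqrt n * δ₀ ^ (n - 1)
      = (M * Real.exp (1/8)) * ((Real.sqrt n * δ ^ (n - 1)) * δ ^ (n - 1)) := by
        rw [e2]; ring
    _ ≤ (M * Real.exp (1/8)) * (((1 - δ)⁻¹) ^ 2 * δ ^ (n - 1)) := by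
        apply mul_le_mul_of_nonneg_left _ (mul_nonneg (by linarith) (Real.exp_pos _).le)
        apply mul_le_mul_of_nonneg_right _ hδpow
        calc Real.sqrt n * δ ^ (n - 1) ≤ (n:ℝ) * δ ^ (n - 1) :=
              mul_le_mul_of_nonneg_right hsqrt hδpow
          _ ≤ ((1 - δ)⁻¹) ^ 2 := h2
    _ = A * δ ^ n := by
        rw [hAdef, ← e1]; field_simp

set_option maxHeartbeats 1000000 in
/-- Corollary 4.3: if `X` has mean zero, variance one, a density `p` with
`T_∞(p‖φ) < ∞`, and satisfies the separation condition, then for every `τ₀ > 0` there are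
`A > 0` and `δ ∈ (0,1)` such that the densities `p_n` of `Z_n` satisfy
`p_n(x) ≤ A δⁿ φ(x)` for a.e. `x` with `|x| ≥ τ₀√n`. -/
theorem renyi_clt_stmt_10
    {Ω : Type*} [MeasurableSpace Ω] (μ : Measure Ω) [IsProbabilityMeasure μ]
    (X : ℕ → Ω → ℝ)
    (hindep : iIndepFun X μ)
    (hident : ∀ k, IdentDistrib (X k) (X 0) μ μ)
    (hmean : ∫ ω, X 0 ω ∂μ = 0) (hvar : variance (X 0) μ = 1)
    (hint : ∀ t : ℝ, Integrable (fun ω => Real.exp (t * X 0 ω)) μ)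
    (hsep : ∀ t₀ : ℝ, 0 < t₀ → ∃ δ : ℝ, δ < 1 ∧
      ∀ t : ℝ, t₀ ≤ |t| → Real.exp (-t ^ 2 / 2) * mgf (X 0) μ t ≤ δ)
    (q : ℝ → ℝ) (hq : HasDensityOn μ (X 0) q) (hfin : Tinf q ≠ ⊤)
    (p : ℕ → ℝ → ℝ)
    (hdens : ∀ n : ℕ, 1 ≤ n → HasDensityOn μ (normSum X n) (p n)) :
    ∀ τ₀ : ℝ, 0 < τ₀ →
      ∃ A : ℝ, 0 < A ∧ ∃ δ : ℝ, 0 < δ ∧ δ < 1 ∧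
        ∀ n : ℕ, 1 ≤ n →
          ∀ᵐ x : ℝ, τ₀ * Real.sqrt n ≤ |x| →
            p n x ≤ A * δ ^ n * stdGauss x := by
  intro τ₀ hτ₀
  classical
  obtain ⟨M, hM1, hMq⟩ := density_le_of_Tinf_ne_top hfin
  have hM0 : (0:ℝ) < M := lt_of_lt_of_le one_pos hM1
  obtain ⟨δ₁, hδ₁lt, hδ₁⟩ := hsep (τ₀ / 2) (by positivity)
  set δ₀ : ℝ := max δ₁ (1/2) with hδ₀def
  have hδ₀pos : (0:ℝ) < δ₀ := lt_of_lt_of_le (by norm_num) (le_max_right _ _)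
  have hδ₀lt : δ₀ < 1 := max_lt hδ₁lt (by norm_num)
  obtain ⟨δ, hδpos, hδlt, A, hApos, hgrow⟩ := grow_bound hM1 hδ₀pos hδ₀lt
  refine ⟨A, hApos, δ, hδpos, hδlt, ?_⟩
  intro n hn
  have hn0 : (0:ℝ) < (n:ℝ) := by exact_mod_cast hn
  have hsn : (0:ℝ) < Real.sqrt n := Real.sqrt_pos.2 hn0
  obtain ⟨hZm, hpm, hpnn, hpmap⟩ := hdens n hn
  -- measurable modification of X
  set Y : ℕ → Ω → ℝ := fun k => if k = 0 then X 0 else ((hident k).aemeasurable_fst).mk (X k)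
    with hYdef
  have hYmeas : ∀ k, Measurable (Y k) := by
    intro k
    by_cases hk : k = 0
    · subst hk; simpa [hYdef] using hq.1
    · simpa [hYdef, hk] using ((hident k).aemeasurable_fst).measurable_mk
  have hXY : ∀ k, X k =ᵐ[μ] Y k := by
    intro k
    by_cases hk : k = 0
    · subst hk; simp only [hYdef, if_pos rfl]; exact Filter.EventuallyEq.rfl
    · simpa [hYdef, hk] using ((hident k).aemeasurable_fst).ae_eq_mk
  have hYindep := iIndepFun_ae_congr hXY hindep
  have hmapY : ∀ k, Measure.map (Y k) μ = Measure.map (X 0) μ := by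
    intro k
    rw [← Measure.map_congr (hXY k)]
    exact (hident k).map_eq
  have hmap0 : Measure.map (Y 0) μ = volume.withDensity (fun x => ENNReal.ofReal (q x)) := by
    rw [hmapY 0, hq.2.2.2]
  set L : ℝ → ℝ := fun t => mgf (X 0) μ t with hLdef
  have hLnn : ∀ t, 0 ≤ L t := fun t => mgf_nonneg
  have hexpmeas : ∀ t : ℝ, Measurable (fun x : ℝ => Real.exp (t * x)) :=
    fun t => (measurable_id.const_mul t).exp
  have hintY : ∀ (t : ℝ) (k : ℕ), Integrable (fun ω => Real.exp (t * Y k ω)) μ := by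
    intro t k
    have hidk : IdentDistrib (fun ω => Real.exp (t * X k ω)) (fun ω => Real.exp (t * X 0 ω)) μ μ :=
      (hident k).comp (hexpmeas t)
    have h1 : Integrable (fun ω => Real.exp (t * X k ω)) μ := hidk.integrable_iff.2 (hint t)
    exact h1.congr ((hXY k).fun_comp fun y => Real.exp (t * y))
  have hmgfY : ∀ (t : ℝ) (k : ℕ), mgf (Y k) μ t = L t := by
    intro t k
    show ∫ ω, Real.exp (t * Y k ω) ∂μ = L t
    rw [← integral_map (hYmeas k).aemeasurable ((hexpmeas t).aestronglyMeasurable),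
      hmapY k, integral_map hq.1.aemeasurable ((hexpmeas t).aestronglyMeasurable)]
    rfl
  set s0 : Finset ℕ := (Finset.range n).erase 0 with hs0
  set R : Ω → ℝ := fun ω => ∑ k ∈ s0, Y k ω with hRdef
  set S : Ω → ℝ := fun ω => ∑ k ∈ Finset.range n, Y k ω with hSdef
  have hRfun : R = ∑ j ∈ s0, Y j := by
    funext ω; simp only [hRdef, Finset.sum_apply]
  have h0mem : (0:ℕ) ∈ Finset.range n := Finset.mem_range.2 (by omega)
  have hSR : ∀ ω, S ω = Y 0 ω + R ω := by
    intro ω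
    simp only [hSdef, hRdef]
    exact (Finset.add_sum_erase _ _ h0mem).symm
  have hRmeas : Measurable R := by
    rw [hRdef]; exact Finset.measurable_sum _ (fun i _ => hYmeas i)
  have hSmeas : Measurable S := by
    rw [hSdef]; exact Finset.measurable_sum _ (fun i _ => hYmeas i)
  have hcard : s0.card = n - 1 := by
    rw [hs0, Finset.card_erase_of_mem h0mem, Finset.card_range]
  have hindepYR : IndepFun (Y 0) R μ := by
    have h := (hYindep.indepFun_finsetSum_of_notMem hYmeas
      (Finset.notMem_erase 0 (Finset.range n))).symm
    rwa [← hRfun] at h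
  have hmgfR : ∀ t : ℝ, mgf R μ t = L t ^ (n - 1) := by
    intro t
    rw [hRfun, hYindep.mgf_sum hYmeas s0,
      Finset.prod_congr rfl (fun i _ => hmgfY t i), Finset.prod_const, hcard]
  have hintR : ∀ t : ℝ, Integrable (fun ω => Real.exp (t * R ω)) μ := by
    intro t
    have h := hYindep.integrable_exp_mul_sum hYmeas (s := s0) (fun i _ => hintY t i)
    rwa [← hRfun] at h
  haveI hprobmap0 : IsProbabilityMeasure (Measure.map (Y 0) μ) :=
    Measure.isProbabilityMeasure_map (hYmeas 0).aemeasurable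
  haveI hprobmapR : IsProbabilityMeasure (Measure.map R μ) :=
    Measure.isProbabilityMeasure_map hRmeas.aemeasurable
  -- core tilted bound at the level of S
  have core : ∀ (t : ℝ) (B : Set ℝ), MeasurableSet B →
      μ (S ⁻¹' B) ≤ ENNReal.ofReal (M * (Real.sqrt (2 * Real.pi))⁻¹ * Real.exp (t ^ 2 / 2)
        * L t ^ (n - 1)) * ∫⁻ s in B, ENNReal.ofReal (Real.exp (-(t * s))) ∂volume := by
    intro t B hB
    set C : ℝ := M * (Real.sqrt (2 * Real.pi))⁻¹ * Real.exp (t ^ 2 / 2) with hCdef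
    have hC0 : (0:ℝ) ≤ C := by
      exact mul_nonneg (mul_nonneg hM0.le (inv_nonneg.2 (Real.sqrt_nonneg _))) (Real.exp_pos _).le
    set I : ℝ≥0∞ := ∫⁻ s in B, ENNReal.ofReal (Real.exp (-(t * s))) ∂volume with hIdef
    have hν : Measure.map (fun ω => (Y 0 ω, R ω)) μ
        = (Measure.map (Y 0) μ).prod (Measure.map R μ) :=
      (indepFun_iff_map_prod_eq_prod_map_map (hYmeas 0).aemeasurable hRmeas.aemeasurable).1
        hindepYR
    have hFmeas : Measurable (fun z : ℝ × ℝ => B.indicator (fun _ => (1:ℝ≥0∞)) (z.1 + z.2)) :=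
      (measurable_one.indicator hB).comp (measurable_fst.add measurable_snd)
    have hq_meas : Measurable fun v : ℝ => ENNReal.ofReal (q v) := hq.2.1.ennreal_ofReal
    have hg0meas : Measurable fun s : ℝ => ENNReal.ofReal (Real.exp (-(t * s)))
        * B.indicator (fun _ => (1:ℝ≥0∞)) s :=
      ((measurable_id.const_mul t).neg.exp.ennreal_ofReal).mul (measurable_one.indicator hB)
    have step1 : μ (S ⁻¹' B)
        = ∫⁻ z : ℝ × ℝ, B.indicator (fun _ => (1:ℝ≥0∞)) (z.1 + z.2)
            ∂((Measure.map (Y 0) μ).prod (Measure.map R μ)) := by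
      rw [← hν, lintegral_map hFmeas ((hYmeas 0).prodMk hRmeas)]
      have hind : ∀ ω, B.indicator (fun _ => (1:ℝ≥0∞)) (Y 0 ω + R ω)
          = (S ⁻¹' B).indicator (fun _ => (1:ℝ≥0∞)) ω := by
        intro ω
        rw [← hSR ω]
        by_cases h : S ω ∈ B <;> simp [Set.indicator_apply, h]
      simp_rw [hind]
      rw [lintegral_indicator (hSmeas hB), setLIntegral_one]
    have step2 : ∫⁻ z : ℝ × ℝ, B.indicator (fun _ => (1:ℝ≥0∞)) (z.1 + z.2)
          ∂((Measure.map (Y 0) μ).prod (Measure.map R μ))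
        = ∫⁻ u, ∫⁻ v, B.indicator (fun _ => (1:ℝ≥0∞)) (v + u) ∂(Measure.map (Y 0) μ)
            ∂(Measure.map R μ) :=
      lintegral_prod_symm _ hFmeas.aemeasurable
    have inner_bound : ∀ u : ℝ,
        ∫⁻ v, B.indicator (fun _ => (1:ℝ≥0∞)) (v + u) ∂(Measure.map (Y 0) μ)
          ≤ ENNReal.ofReal C * ENNReal.ofReal (Real.exp (t * u)) * I := by
      intro u
      have hpoint : ∀ v : ℝ, M * stdGauss v ≤ C * Real.exp (t * u) * Real.exp (-(t * (v + u))) := by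
        intro v
        have h2 : C * Real.exp (t * u) * Real.exp (-(t * (v + u)))
            = M * (Real.sqrt (2 * Real.pi))⁻¹ * Real.exp (t ^ 2 / 2 + t * u + -(t * (v + u))) := by
          rw [hCdef, Real.exp_add, Real.exp_add]; ring
        have h3 : t ^ 2 / 2 + t * u + -(t * (v + u)) = t ^ 2 / 2 + -(t * v) := by ring
        rw [h2, h3, Real.exp_add]
        have h4 : M * stdGauss v = M * (Real.sqrt (2 * Real.pi))⁻¹ * Real.exp (-v ^ 2 / 2) := by
          rw [stdGauss]; ring
        rw [h4]
        exact mul_le_mul_of_nonneg_left (tilt_bound t v)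
          (mul_nonneg hM0.le (inv_nonneg.2 (Real.sqrt_nonneg _)))
      have hindmeas : Measurable (fun v : ℝ => B.indicator (fun _ : ℝ => (1:ℝ≥0∞)) (v + u)) := by
        exact (measurable_one.indicator hB).comp (measurable_id.add_const u)
      have hg1meas : Measurable (fun v : ℝ => ENNReal.ofReal (Real.exp (-(t * (v + u))))
          * B.indicator (fun _ : ℝ => (1:ℝ≥0∞)) (v + u)) := by
        exact hg0meas.comp (measurable_id.add_const u)
      calc ∫⁻ v, B.indicator (fun _ => (1:ℝ≥0∞)) (v + u) ∂(Measure.map (Y 0) μ)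
          = ∫⁻ v, ENNReal.ofReal (q v) * B.indicator (fun _ => (1:ℝ≥0∞)) (v + u) ∂volume := by
            rw [hmap0, lintegral_withDensity_eq_lintegral_mul volume hq_meas hindmeas]
            rfl
        _ ≤ ∫⁻ v, ENNReal.ofReal (M * stdGauss v)
              * B.indicator (fun _ => (1:ℝ≥0∞)) (v + u) ∂volume := by
            refine lintegral_mono_ae ?_
            filter_upwards [hMq] with v hv
            exact mul_le_mul_left (ENNReal.ofReal_le_ofReal hv) _
        _ ≤ ∫⁻ v, ENNReal.ofReal (C * Real.exp (t * u))
              * (ENNReal.ofReal (Real.exp (-(t * (v + u))))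
              * B.indicator (fun _ => (1:ℝ≥0∞)) (v + u)) ∂volume := by
            refine lintegral_mono fun v => ?_
            rw [← mul_assoc, ← ENNReal.ofReal_mul (mul_nonneg hC0 (Real.exp_pos _).le)]
            exact mul_le_mul_left (ENNReal.ofReal_le_ofReal (hpoint v)) _
        _ = ENNReal.ofReal (C * Real.exp (t * u))
              * ∫⁻ v, ENNReal.ofReal (Real.exp (-(t * (v + u))))
                * B.indicator (fun _ => (1:ℝ≥0∞)) (v + u) ∂volume := by
            rw [lintegral_const_mul _ hg1meas]
        _ = ENNReal.ofReal (C * Real.exp (t * u))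
              * ∫⁻ s, ENNReal.ofReal (Real.exp (-(t * s)))
                * B.indicator (fun _ => (1:ℝ≥0∞)) s ∂volume := by
            congr 1
            exact lintegral_add_right_eq_self
              (fun s => ENNReal.ofReal (Real.exp (-(t * s)))
                * B.indicator (fun _ => (1:ℝ≥0∞)) s) u
        _ = ENNReal.ofReal C * ENNReal.ofReal (Real.exp (t * u)) * I := by
            rw [ENNReal.ofReal_mul hC0]
            congr 1
            have hind2 : (fun s => ENNReal.ofReal (Real.exp (-(t * s)))
                * B.indicator (fun _ => (1:ℝ≥0∞)) s)
                = B.indicator (fun s => ENNReal.ofReal (Real.exp (-(t * s)))) := by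
              funext s; by_cases h : s ∈ B <;> simp [h]
            rw [hIdef, hind2, lintegral_indicator hB]
    have houter : ∫⁻ u, ENNReal.ofReal (Real.exp (t * u)) ∂(Measure.map R μ)
        = ENNReal.ofReal (L t ^ (n - 1)) := by
      rw [lintegral_map ((hexpmeas t).ennreal_ofReal) hRmeas,
        ← ofReal_integral_eq_lintegral_ofReal (hintR t)
          (Filter.Eventually.of_forall fun ω => (Real.exp_pos _).le)]
      congr 1
      exact hmgfR t
    calc μ (S ⁻¹' B)
        = ∫⁻ u, ∫⁻ v, B.indicator (fun _ => (1:ℝ≥0∞)) (v + u) ∂(Measure.map (Y 0) μ)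
            ∂(Measure.map R μ) := by rw [step1, step2]
      _ ≤ ∫⁻ u, ENNReal.ofReal C * ENNReal.ofReal (Real.exp (t * u)) * I ∂(Measure.map R μ) :=
          lintegral_mono inner_bound
      _ = ENNReal.ofReal C * I * ∫⁻ u, ENNReal.ofReal (Real.exp (t * u)) ∂(Measure.map R μ) := by
          simp_rw [show ∀ u : ℝ, ENNReal.ofReal C * ENNReal.ofReal (Real.exp (t * u)) * I
            = (ENNReal.ofReal C * I) * ENNReal.ofReal (Real.exp (t * u)) from fun u => by ring]
          rw [lintegral_const_mul _ ((hexpmeas t).ennreal_ofReal)]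
      _ = ENNReal.ofReal C * I * ENNReal.ofReal (L t ^ (n - 1)) := by rw [houter]
      _ = ENNReal.ofReal (C * L t ^ (n - 1)) * I := by
          rw [ENNReal.ofReal_mul hC0]; ring
  -- transfer to the densities p n
  have key : ∀ (t : ℝ) (B : Set ℝ), MeasurableSet B →
      ∫⁻ x in B, ENNReal.ofReal (p n x) ∂volume
        ≤ ∫⁻ x in B, ENNReal.ofReal ((M * (Real.sqrt (2 * Real.pi))⁻¹ * Real.sqrt n
            * Real.exp (t ^ 2 / 2) * L t ^ (n - 1)) * Real.exp (-(t * (Real.sqrt n * x))))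
          ∂volume := by
    intro t B hB
    have hdivmeas : Measurable fun s : ℝ => s / Real.sqrt n := measurable_id.div_const _
    set B' : Set ℝ := (fun s : ℝ => s / Real.sqrt n) ⁻¹' B with hB'def
    have hB' : MeasurableSet B' := hdivmeas hB
    have h1 : ∫⁻ x in B, ENNReal.ofReal (p n x) ∂volume = μ (normSum X n ⁻¹' B) := by
      rw [← withDensity_apply _ hB, ← hpmap, Measure.map_apply hZm hB]
    have h2 : μ (normSum X n ⁻¹' B) = μ (S ⁻¹' B') := by
      apply measure_congr
      rw [Filter.eventuallyEq_set]
      filter_upwards [ae_all_iff.2 hXY] with ω hω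
      have hsum : normSum X n ω = S ω / Real.sqrt n := by
        show (∑ k ∈ Finset.range n, X k ω) / Real.sqrt n = S ω / Real.sqrt n
        simp only [hSdef]
        congr 1
        exact Finset.sum_congr rfl fun k _ => hω k
      simp only [Set.mem_preimage, hB'def]
      rw [hsum]
    have hexpmeas' : Measurable fun s : ℝ => ENNReal.ofReal (Real.exp (-(t * s))) :=
      (measurable_id.const_mul t).neg.exp.ennreal_ofReal
    have hg : Measurable (B'.indicator fun s : ℝ => ENNReal.ofReal (Real.exp (-(t * s)))) :=
      hexpmeas'.indicator hB'
    have hvol : (volume : Measure ℝ)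
        = ENNReal.ofReal |Real.sqrt n| • Measure.map (fun x => Real.sqrt n * x) volume :=
      (Real.smul_map_volume_mul_left hsn.ne').symm
    have h3 : ∫⁻ s in B', ENNReal.ofReal (Real.exp (-(t * s))) ∂volume
        = ENNReal.ofReal (Real.sqrt n)
          * ∫⁻ x in B, ENNReal.ofReal (Real.exp (-(t * (Real.sqrt n * x)))) ∂volume := by
      rw [← lintegral_indicator hB']
      calc ∫⁻ s, B'.indicator (fun s => ENNReal.ofReal (Real.exp (-(t * s)))) s ∂volume
          = ENNReal.ofReal |Real.sqrt n| * ∫⁻ s, B'.indicator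
              (fun s => ENNReal.ofReal (Real.exp (-(t * s)))) s
              ∂(Measure.map (fun x => Real.sqrt n * x) volume) := by
            conv_lhs => rw [hvol]
            rw [lintegral_smul_measure, smul_eq_mul]
        _ = ENNReal.ofReal (Real.sqrt n) * ∫⁻ x, B'.indicator
              (fun s => ENNReal.ofReal (Real.exp (-(t * s)))) (Real.sqrt n * x) ∂volume := by
            rw [abs_of_pos hsn, lintegral_map hg (measurable_const_mul _)]
        _ = ENNReal.ofReal (Real.sqrt n)
              * ∫⁻ x in B, ENNReal.ofReal (Real.exp (-(t * (Real.sqrt n * x)))) ∂volume := by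
            congr 1
            rw [← lintegral_indicator hB]
            congr 1; funext x
            have hmem : (Real.sqrt n * x ∈ B') ↔ x ∈ B := by
              rw [hB'def, Set.mem_preimage, mul_div_cancel_left₀ _ hsn.ne']
            simp only [Set.indicator_apply, hmem]
    have hC'0 : (0:ℝ) ≤ M * (Real.sqrt (2 * Real.pi))⁻¹ * Real.exp (t ^ 2 / 2) * L t ^ (n - 1) :=
      mul_nonneg (mul_nonneg (mul_nonneg hM0.le (inv_nonneg.2 (Real.sqrt_nonneg _)))
        (Real.exp_pos _).le) (pow_nonneg (hLnn t) _)
    have hK0 : (0:ℝ) ≤ M * (Real.sqrt (2 * Real.pi))⁻¹ * Real.sqrt n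
        * Real.exp (t ^ 2 / 2) * L t ^ (n - 1) := by
      have := hC'0
      nlinarith [Real.sqrt_nonneg (n:ℝ), Real.exp_pos (t ^ 2 / 2),
        inv_nonneg.2 (Real.sqrt_nonneg (2 * Real.pi)), pow_nonneg (hLnn t) (n - 1), hM0.le]
    calc ∫⁻ x in B, ENNReal.ofReal (p n x) ∂volume = μ (S ⁻¹' B') := by rw [h1, h2]
      _ ≤ ENNReal.ofReal (M * (Real.sqrt (2 * Real.pi))⁻¹ * Real.exp (t ^ 2 / 2)
            * L t ^ (n - 1)) * ∫⁻ s in B', ENNReal.ofReal (Real.exp (-(t * s))) ∂volume :=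
          core t B' hB'
      _ = (ENNReal.ofReal (M * (Real.sqrt (2 * Real.pi))⁻¹ * Real.exp (t ^ 2 / 2)
            * L t ^ (n - 1)) * ENNReal.ofReal (Real.sqrt n))
            * ∫⁻ x in B, ENNReal.ofReal (Real.exp (-(t * (Real.sqrt n * x)))) ∂volume := by
          rw [h3, ← mul_assoc]
      _ = ENNReal.ofReal (M * (Real.sqrt (2 * Real.pi))⁻¹ * Real.sqrt n
            * Real.exp (t ^ 2 / 2) * L t ^ (n - 1))
            * ∫⁻ x in B, ENNReal.ofReal (Real.exp (-(t * (Real.sqrt n * x)))) ∂volume := by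
          rw [← ENNReal.ofReal_mul hC'0]
          congr 2
          ring
      _ = ∫⁻ x in B, ENNReal.ofReal ((M * (Real.sqrt (2 * Real.pi))⁻¹ * Real.sqrt n
            * Real.exp (t ^ 2 / 2) * L t ^ (n - 1)) * Real.exp (-(t * (Real.sqrt n * x))))
          ∂volume := by
          rw [← lintegral_const_mul _ (f := fun x => ENNReal.ofReal (Real.exp (-(t * (Real.sqrt n * x))))) (((measurable_const_mul (Real.sqrt (n:ℝ))).const_mul
            t).neg.exp.ennreal_ofReal)]
          refine lintegral_congr fun x => ?_
          rw [ENNReal.ofReal_mul hK0]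
  -- pointwise a.e. bound for each t
  have hae_t : ∀ t : ℝ, ∀ᵐ x : ℝ, p n x ≤ (M * (Real.sqrt (2 * Real.pi))⁻¹ * Real.sqrt n
      * Real.exp (t ^ 2 / 2) * L t ^ (n - 1)) * Real.exp (-(t * (Real.sqrt n * x))) := by
    intro t
    have hK0 : (0:ℝ) ≤ M * (Real.sqrt (2 * Real.pi))⁻¹ * Real.sqrt n
        * Real.exp (t ^ 2 / 2) * L t ^ (n - 1) :=
      mul_nonneg (mul_nonneg (mul_nonneg (mul_nonneg hM0.le
        (inv_nonneg.2 (Real.sqrt_nonneg _))) (Real.sqrt_nonneg _))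
        (Real.exp_pos _).le) (pow_nonneg (hLnn t) _)
    have hmle := ae_le_of_forall_setLIntegral_le_of_sigmaFinite (μ := volume)
      (f := fun x => ENNReal.ofReal (p n x))
      (g := fun x => ENNReal.ofReal ((M * (Real.sqrt (2 * Real.pi))⁻¹ * Real.sqrt n
        * Real.exp (t ^ 2 / 2) * L t ^ (n - 1)) * Real.exp (-(t * (Real.sqrt n * x)))))
      hpm.ennreal_ofReal (fun s hs _ => key t s hs)
    filter_upwards [hmle] with x hx
    exact (ENNReal.ofReal_le_ofReal_iff
      (mul_nonneg hK0 (Real.exp_pos _).le)).1 hx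
  have hall : ∀ᵐ x : ℝ, ∀ k : ℤ, p n x ≤ (M * (Real.sqrt (2 * Real.pi))⁻¹ * Real.sqrt n
      * Real.exp ((gridT τ₀ n k) ^ 2 / 2) * L (gridT τ₀ n k) ^ (n - 1))
      * Real.exp (-(gridT τ₀ n k * (Real.sqrt n * x))) :=
    ae_all_iff.2 fun k => hae_t (gridT τ₀ n k)
  filter_upwards [hall] with x hx hxbig
  -- pointwise computation
  set u : ℝ := x / Real.sqrt n with hudef
  have hxu : x = Real.sqrt n * u := by rw [hudef]; field_simp
  have hu : τ₀ ≤ |u| := by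
    rw [hudef, abs_div, abs_of_pos hsn, le_div_iff₀ hsn]
    linarith
  obtain ⟨k, hk1, hk2⟩ := gridT_spec τ₀ hτ₀ n hn u hu
  set t : ℝ := gridT τ₀ n k with htdef
  have hpx := hx k
  rw [← htdef] at hpx
  set ρ : ℝ := Real.exp (-t ^ 2 / 2) * L t with hρdef
  have hρnn : (0:ℝ) ≤ ρ := mul_nonneg (Real.exp_pos _).le (hLnn t)
  have hρδ : ρ ≤ δ₀ := le_trans (hδ₁ t hk1) (le_max_left _ _)
  have hLt : L t = Real.exp (t ^ 2 / 2) * ρ := by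
    rw [hρdef, ← mul_assoc, ← Real.exp_add]
    rw [show t ^ 2 / 2 + -t ^ 2 / 2 = 0 by ring, Real.exp_zero, one_mul]
  have hsqx : Real.sqrt n * x = (n:ℝ) * u := by
    rw [hxu, ← mul_assoc, Real.mul_self_sqrt hn0.le]
  have hx2 : x ^ 2 = (n:ℝ) * u ^ 2 := by
    rw [hxu, mul_pow, Real.sq_sqrt hn0.le]
  have hcast : ((n - 1 : ℕ) : ℝ) = (n:ℝ) - 1 := by
    rw [Nat.cast_sub hn]; norm_num
  have hexpcomb : Real.exp (t ^ 2 / 2) * Real.exp (((n:ℝ) - 1) * (t ^ 2 / 2))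
      * Real.exp (-(t * ((n:ℝ) * u)))
      = Real.exp ((n:ℝ) * ((t - u) ^ 2 - u ^ 2) / 2) := by
    rw [← Real.exp_add, ← Real.exp_add]
    congr 1
    ring
  have hKeq : M * (Real.sqrt (2 * Real.pi))⁻¹ * Real.sqrt n * Real.exp (t ^ 2 / 2)
        * L t ^ (n - 1) * Real.exp (-(t * (Real.sqrt n * x)))
      = M * (Real.sqrt (2 * Real.pi))⁻¹ * Real.sqrt n * ρ ^ (n - 1)
        * Real.exp ((n:ℝ) * ((t - u) ^ 2 - u ^ 2) / 2) := by
    rw [hLt, mul_pow, ← Real.exp_nat_mul, hcast, hsqx]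
    linear_combination (M * (Real.sqrt (2 * Real.pi))⁻¹ * Real.sqrt n * ρ ^ (n - 1)) * hexpcomb
  have hE : (n:ℝ) * ((t - u) ^ 2 - u ^ 2) / 2 ≤ 1/8 + -x ^ 2 / 2 := by
    have htu : (t - u) ^ 2 ≤ (1 / (2 * (n:ℝ))) ^ 2 := by
      rw [← sq_abs]
      exact pow_le_pow_left₀ (abs_nonneg _) hk2 2
    have hprod : (n:ℝ) / 2 * (t - u) ^ 2 ≤ (n:ℝ) / 2 * (1 / (2 * (n:ℝ))) ^ 2 :=
      mul_le_mul_of_nonneg_left htu (by positivity)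
    have h8 : (n:ℝ) / 2 * (1 / (2 * (n:ℝ))) ^ 2 ≤ 1/8 := by
      have hne : (n:ℝ) ≠ 0 := hn0.ne'
      have heq : (n:ℝ) / 2 * (1 / (2 * (n:ℝ))) ^ 2 = 1 / (8 * (n:ℝ)) := by
        field_simp; ring
      rw [heq]
      rw [div_le_div_iff₀ (by positivity) (by norm_num)]
      have hnR : (1:ℝ) ≤ (n:ℝ) := by exact_mod_cast hn
      linarith
    linarith [hprod, h8, hx2]
  have hprefnn : (0:ℝ) ≤ M * (Real.sqrt (2 * Real.pi))⁻¹ * Real.sqrt n * ρ ^ (n - 1) :=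
    mul_nonneg (mul_nonneg (mul_nonneg hM0.le (inv_nonneg.2 (Real.sqrt_nonneg _)))
      (Real.sqrt_nonneg _)) (pow_nonneg hρnn _)
  calc p n x ≤ M * (Real.sqrt (2 * Real.pi))⁻¹ * Real.sqrt n * Real.exp (t ^ 2 / 2)
        * L t ^ (n - 1) * Real.exp (-(t * (Real.sqrt n * x))) := hpx
    _ = M * (Real.sqrt (2 * Real.pi))⁻¹ * Real.sqrt n * ρ ^ (n - 1)
        * Real.exp ((n:ℝ) * ((t - u) ^ 2 - u ^ 2) / 2) := hKeq
    _ ≤ M * (Real.sqrt (2 * Real.pi))⁻¹ * Real.sqrt n * ρ ^ (n - 1)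
        * (Real.exp (1/8) * Real.exp (-x ^ 2 / 2)) := by
        apply mul_le_mul_of_nonneg_left _ hprefnn
        rw [← Real.exp_add]
        exact Real.exp_le_exp.2 hE
    _ ≤ M * (Real.sqrt (2 * Real.pi))⁻¹ * Real.sqrt n * δ₀ ^ (n - 1)
        * (Real.exp (1/8) * Real.exp (-x ^ 2 / 2)) := by
        apply mul_le_mul_of_nonneg_right _ (mul_nonneg (Real.exp_pos _).le (Real.exp_pos _).le)
        apply mul_le_mul_of_nonneg_left (pow_le_pow_left₀ hρnn hρδ _)
        exact mul_nonneg (mul_nonneg hM0.le (inv_nonneg.2 (Real.sqrt_nonneg _)))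
          (Real.sqrt_nonneg _)
    _ = (M * Real.exp (1/8) * Real.sqrt n * δ₀ ^ (n - 1))
        * ((Real.sqrt (2 * Real.pi))⁻¹ * Real.exp (-x ^ 2 / 2)) := by ring
    _ ≤ (A * δ ^ n) * ((Real.sqrt (2 * Real.pi))⁻¹ * Real.exp (-x ^ 2 / 2)) := by
        apply mul_le_mul_of_nonneg_right (hgrow n hn)
        positivity
    _ = A * δ ^ n * stdGauss x := by rw [stdGauss]
end

section
/- Let X be a random variable with density p satisfying p(x) ≤ c φ(x) for almost every x, where c = 1 + T_∞(p‖φ) < ∞. Then for every h ∈ ℝ, the variance of the Esscher-tilted distribution satisfies σ_h = √(K''(h)) ≥ √(π/(6c²)) · e^{−A(h)}, where K(h) = log E[e^{hX}] and A(h) = h²/2 − K(h). -/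
open MeasureTheory ProbabilityTheory Filter Real

lemma aux_gauss_int (k : ℕ) (a : ℝ) :
    Integrable (fun x : ℝ => |x| ^ k * Real.exp (a * |x|) * Real.exp (-x ^ 2 / 2)) := by
  have hb : (0:ℝ) < 1/4 := by norm_num
  refine Integrable.mono'
    ((integrable_exp_neg_mul_sq hb).const_mul ((k.factorial : ℝ) * Real.exp ((1 + |a|) ^ 2)))
    ?_ (Filter.Eventually.of_forall fun x => ?_)
  · exact (((continuous_abs.pow k).mul ((continuous_const.mul continuous_abs).rexp)).mul
      ((continuous_id.pow 2).neg.div_const 2).rexp).aestronglyMeasurable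
  · have h0 : (0:ℝ) ≤ |x| ^ k * Real.exp (a * |x|) * Real.exp (-x ^ 2 / 2) := by positivity
    rw [Real.norm_eq_abs, abs_of_nonneg h0]
    have h1 : |x| ^ k ≤ (k.factorial : ℝ) * Real.exp |x| := by
      have h := Real.pow_div_factorial_le_exp (x := |x|) (abs_nonneg x) k
      have hk : (0:ℝ) < (k.factorial : ℝ) := by positivity
      rw [div_le_iff₀ hk] at h
      linarith [h]
    have h2 : Real.exp (a * |x|) ≤ Real.exp (|a| * |x|) :=
      Real.exp_le_exp.mpr (by
        have := le_abs_self (a * |x|)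
        rwa [abs_mul, abs_abs] at this)
    have s1 : |x| ^ k * Real.exp (a * |x|) * Real.exp (-x ^ 2 / 2)
        ≤ ((k.factorial : ℝ) * Real.exp |x|) * Real.exp (|a| * |x|) * Real.exp (-x ^ 2 / 2) := by
      apply mul_le_mul_of_nonneg_right _ (Real.exp_pos _).le
      exact mul_le_mul h1 h2 (Real.exp_pos _).le (by positivity)
    have s2 : ((k.factorial : ℝ) * Real.exp |x|) * Real.exp (|a| * |x|) * Real.exp (-x ^ 2 / 2)
        = (k.factorial : ℝ) * Real.exp (|x| + |a| * |x| + -x ^ 2 / 2) := by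
      rw [Real.exp_add, Real.exp_add]; ring
    have s3 : (k.factorial : ℝ) * Real.exp (|x| + |a| * |x| + -x ^ 2 / 2)
        ≤ (k.factorial : ℝ) * Real.exp ((1 + |a|) ^ 2 + -(1/4 * x ^ 2)) := by
      apply mul_le_mul_of_nonneg_left (Real.exp_le_exp.mpr _) (by positivity)
      nlinarith [sq_nonneg ((1 + |a|) - |x| / 2), sq_abs x, abs_nonneg x, abs_nonneg a]
    have s4 : (k.factorial : ℝ) * Real.exp ((1 + |a|) ^ 2 + -(1/4 * x ^ 2))
        = (k.factorial : ℝ) * Real.exp ((1 + |a|) ^ 2) * Real.exp (-(1/4) * x ^ 2) := by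
      rw [Real.exp_add]; ring
    linarith [s1, s3, s2 ▸ s1, s4 ▸ s3]

lemma aux_int {p : ℝ → ℝ} {c : ℝ} (hpm : Measurable p) (hp0 : ∀ x, 0 ≤ p x)
    (hdom : ∀ᵐ x : ℝ, p x ≤ c * stdGauss x) (k : ℕ) (t : ℝ) :
    Integrable (fun x => |x| ^ k * Real.exp (t * x) * p x) := by
  refine Integrable.mono'
    ((aux_gauss_int k |t|).const_mul (c * (Real.sqrt (2 * Real.pi))⁻¹)) ?_ ?_
  · exact (((continuous_abs.pow k).mul (continuous_const.mul continuous_id).rexp).measurable.mul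
      hpm).aestronglyMeasurable
  · filter_upwards [hdom] with x hx
    have hpx := hp0 x
    have h0 : (0:ℝ) ≤ |x| ^ k * Real.exp (t * x) * p x := by positivity
    rw [Real.norm_eq_abs, abs_of_nonneg h0]
    have h2 : Real.exp (t * x) ≤ Real.exp (|t| * |x|) :=
      Real.exp_le_exp.mpr (by
        have := le_abs_self (t * x)
        rwa [abs_mul] at this)
    have s1 : |x| ^ k * Real.exp (t * x) * p x
        ≤ |x| ^ k * Real.exp (|t| * |x|) * (c * stdGauss x) := by
      apply mul_le_mul (mul_le_mul_of_nonneg_left h2 (by positivity)) hx hpx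
      positivity
    have s2 : |x| ^ k * Real.exp (|t| * |x|) * (c * stdGauss x)
        = c * (Real.sqrt (2 * Real.pi))⁻¹
          * (|x| ^ k * Real.exp (|t| * |x|) * Real.exp (-x ^ 2 / 2)) := by
      unfold stdGauss; ring
    linarith [s2 ▸ s1]

section auxsec
variable {p : ℝ → ℝ} {c : ℝ}


lemma auxIntA (hpm : Measurable p) (hp0 : ∀ x, 0 ≤ p x)
    (hdom : ∀ᵐ x : ℝ, p x ≤ c * stdGauss x) (t : ℝ) :
    Integrable (fun x => Real.exp (t * x) * p x) := by
  have := aux_int hpm hp0 hdom 0 t; simpa using this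

lemma auxIntB (hpm : Measurable p) (hp0 : ∀ x, 0 ≤ p x)
    (hdom : ∀ᵐ x : ℝ, p x ≤ c * stdGauss x) (t : ℝ) :
    Integrable (fun x => Real.exp (t * x) * (x * p x)) := by
  refine (aux_int hpm hp0 hdom 1 t).mono'
    ((((continuous_const.mul continuous_id).rexp).measurable.mul
      (measurable_id.mul hpm)).aestronglyMeasurable) (Eventually.of_forall fun x => ?_)
  have := hp0 x
  rw [Real.norm_eq_abs, abs_mul, abs_mul, Real.abs_exp, abs_of_nonneg this, pow_one]
  exact le_of_eq (by ring)

lemma auxIntC (hpm : Measurable p) (hp0 : ∀ x, 0 ≤ p x)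
    (hdom : ∀ᵐ x : ℝ, p x ≤ c * stdGauss x) (t : ℝ) :
    Integrable (fun x => Real.exp (t * x) * (x * (x * p x))) := by
  refine (aux_int hpm hp0 hdom 2 t).mono'
    ((((continuous_const.mul continuous_id).rexp).measurable.mul
      (measurable_id.mul (measurable_id.mul hpm))).aestronglyMeasurable)
    (Eventually.of_forall fun x => ?_)
  have := hp0 x
  rw [Real.norm_eq_abs, abs_mul, abs_mul, abs_mul, Real.abs_exp, abs_of_nonneg this]
  exact le_of_eq (by ring)

lemma auxD0 (hpm : Measurable p) (hp0 : ∀ x, 0 ≤ p x)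
    (hdom : ∀ᵐ x : ℝ, p x ≤ c * stdGauss x) (t : ℝ) :
    HasDerivAt (fun u => ∫ x, Real.exp (u * x) * p x)
      (∫ x, Real.exp (t * x) * (x * p x)) t := by
  have key := hasDerivAt_integral_of_dominated_loc_of_deriv_le (𝕜 := ℝ)
    (F := fun u x => Real.exp (u * x) * p x)
    (F' := fun u x => Real.exp (u * x) * (x * p x))
    (bound := fun x => c * (Real.sqrt (2 * Real.pi))⁻¹ *
      (|x| ^ 1 * Real.exp ((|t| + 1) * |x|) * Real.exp (-x ^ 2 / 2)))
    (μ := volume) (x₀ := t) (s := Metric.ball t 1) (Metric.ball_mem_nhds t one_pos)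
    (Eventually.of_forall fun u =>
      ((((continuous_const.mul continuous_id).rexp).measurable.mul hpm).aestronglyMeasurable))
    (auxIntA hpm hp0 hdom t)
    ((((continuous_const.mul continuous_id).rexp).measurable.mul
      (measurable_id.mul hpm)).aestronglyMeasurable)
    ?_ ((aux_gauss_int 1 (|t| + 1)).const_mul _)
    (Eventually.of_forall fun x u _ => ?_)
  · exact key.2
  · filter_upwards [hdom] with x hx
    intro u hu
    have hu' : |u| ≤ |t| + 1 := by
      have := Metric.mem_ball.mp hu
      rw [Real.dist_eq] at this
      have h1 := abs_sub_abs_le_abs_sub u t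
      linarith
    have hpx := hp0 x
    have h2 : Real.exp (u * x) ≤ Real.exp ((|t| + 1) * |x|) := by
      apply Real.exp_le_exp.mpr
      have h3 : u * x ≤ |u| * |x| := by
        have := le_abs_self (u * x); rwa [abs_mul] at this
      have h4 : |u| * |x| ≤ (|t| + 1) * |x| :=
        mul_le_mul_of_nonneg_right hu' (abs_nonneg x)
      linarith
    have h0 : (0:ℝ) ≤ Real.exp (u * x) * (|x| * p x) := by positivity
    rw [Real.norm_eq_abs, abs_mul, abs_mul, Real.abs_exp, abs_of_nonneg hpx]
    have s1 : Real.exp (u * x) * (|x| * p x)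
        ≤ Real.exp ((|t| + 1) * |x|) * (|x| * (c * stdGauss x)) := by
      apply mul_le_mul h2 (mul_le_mul_of_nonneg_left hx (abs_nonneg x)) (by positivity)
        (Real.exp_pos _).le
    have s2 : Real.exp ((|t| + 1) * |x|) * (|x| * (c * stdGauss x))
        = c * (Real.sqrt (2 * Real.pi))⁻¹ *
          (|x| ^ 1 * Real.exp ((|t| + 1) * |x|) * Real.exp (-x ^ 2 / 2)) := by
      unfold stdGauss; ring
    linarith [s2 ▸ s1]
  · have hd := ((hasDerivAt_mul_const (x : ℝ)).exp (x := u)).mul_const (p x)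
    rw [mul_assoc] at hd
    exact hd

lemma auxD1 (hpm : Measurable p) (hp0 : ∀ x, 0 ≤ p x)
    (hdom : ∀ᵐ x : ℝ, p x ≤ c * stdGauss x) (t : ℝ) :
    HasDerivAt (fun u => ∫ x, Real.exp (u * x) * (x * p x))
      (∫ x, Real.exp (t * x) * (x * (x * p x))) t := by
  have key := hasDerivAt_integral_of_dominated_loc_of_deriv_le (𝕜 := ℝ)
    (F := fun u x => Real.exp (u * x) * (x * p x))
    (F' := fun u x => Real.exp (u * x) * (x * (x * p x)))
    (bound := fun x => c * (Real.sqrt (2 * Real.pi))⁻¹ *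
      (|x| ^ 2 * Real.exp ((|t| + 1) * |x|) * Real.exp (-x ^ 2 / 2)))
    (μ := volume) (x₀ := t) (s := Metric.ball t 1) (Metric.ball_mem_nhds t one_pos)
    (Eventually.of_forall fun u =>
      ((((continuous_const.mul continuous_id).rexp).measurable.mul
        (measurable_id.mul hpm)).aestronglyMeasurable))
    (auxIntB hpm hp0 hdom t)
    ((((continuous_const.mul continuous_id).rexp).measurable.mul
      (measurable_id.mul (measurable_id.mul hpm))).aestronglyMeasurable)
    ?_ ((aux_gauss_int 2 (|t| + 1)).const_mul _)
    (Eventually.of_forall fun x u _ => ?_)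
  · exact key.2
  · filter_upwards [hdom] with x hx
    intro u hu
    have hu' : |u| ≤ |t| + 1 := by
      have := Metric.mem_ball.mp hu
      rw [Real.dist_eq] at this
      have h1 := abs_sub_abs_le_abs_sub u t
      linarith
    have hpx := hp0 x
    have h2 : Real.exp (u * x) ≤ Real.exp ((|t| + 1) * |x|) := by
      apply Real.exp_le_exp.mpr
      have h3 : u * x ≤ |u| * |x| := by
        have := le_abs_self (u * x); rwa [abs_mul] at this
      have h4 : |u| * |x| ≤ (|t| + 1) * |x| :=
        mul_le_mul_of_nonneg_right hu' (abs_nonneg x)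
      linarith
    rw [Real.norm_eq_abs, abs_mul, abs_mul, abs_mul, Real.abs_exp, abs_of_nonneg hpx]
    have s1 : Real.exp (u * x) * (|x| * (|x| * p x))
        ≤ Real.exp ((|t| + 1) * |x|) * (|x| * (|x| * (c * stdGauss x))) := by
      apply mul_le_mul h2 (mul_le_mul_of_nonneg_left
        (mul_le_mul_of_nonneg_left hx (abs_nonneg x)) (abs_nonneg x)) (by positivity)
        (Real.exp_pos _).le
    have s2 : Real.exp ((|t| + 1) * |x|) * (|x| * (|x| * (c * stdGauss x)))
        = c * (Real.sqrt (2 * Real.pi))⁻¹ *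
          (|x| ^ 2 * Real.exp ((|t| + 1) * |x|) * Real.exp (-x ^ 2 / 2)) := by
      unfold stdGauss; ring
    linarith [s2 ▸ s1]
  · have hd := ((hasDerivAt_mul_const (x : ℝ)).exp (x := u)).mul_const (x * p x)
    rw [mul_assoc] at hd
    exact hd

end auxsec

set_option maxHeartbeats 2000000 in
/-- Lemma 5.1: if the density `p` of `X` satisfies `p ≤ cφ` a.e. with
`c = 1 + T_∞(p‖φ) < ∞`, then the standard deviation `σ_h = √(K''(h))` of the Esscher tilt
satisfies `σ_h ≥ √(π/(6c²)) e^{−A(h)}` for every `h`. -/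
theorem renyi_clt_stmt_11
    {Ω : Type*} [MeasurableSpace Ω] (μ : Measure Ω) [IsProbabilityMeasure μ]
    (X : Ω → ℝ)
    (p : ℝ → ℝ) (hp : HasDensityOn μ X p)
    (hfin : Tinf p ≠ ⊤) (c : ℝ) (hc : c = 1 + (Tinf p).toReal)
    (hdom : ∀ᵐ x : ℝ, p x ≤ c * stdGauss x)
    (K : ℝ → ℝ) (hK : K = fun t => Real.log (mgf X μ t))
    (A : ℝ → ℝ) (hA : A = fun t => t ^ 2 / 2 - K t) :
    ∀ h : ℝ,
      Real.sqrt (Real.pi / (6 * c ^ 2)) * Real.exp (-A h) ≤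
        Real.sqrt (deriv (deriv K) h) := by
  obtain ⟨hXm, hpm, hp0, hmap⟩ := hp
  intro h
  have hc1 : (1:ℝ) ≤ c := by
    rw [hc]; have := ENNReal.toReal_nonneg (a := Tinf p); linarith
  have hcpos : (0:ℝ) < c := lt_of_lt_of_le one_pos hc1
  have hsπ : (0:ℝ) < Real.sqrt (2 * Real.pi) := Real.sqrt_pos.mpr (by positivity)
  -- support of p has positive measure
  have hsupp : 0 < volume (Function.support p) := by
    haveI : IsProbabilityMeasure (Measure.map X μ) := Measure.isProbabilityMeasure_map hXm.aemeasurable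
    have h1 : (volume.withDensity fun x => ENNReal.ofReal (p x)) Set.univ = 1 := by
      rw [← hmap]; exact measure_univ
    have h2 : ∫⁻ x, ENNReal.ofReal (p x) = 1 := by
      rw [← setLIntegral_univ, ← withDensity_apply _ MeasurableSet.univ, h1]
    by_contra hnot
    rw [not_lt, le_zero_iff] at hnot
    have hae : ∀ᵐ x, p x = 0 := by
      rw [ae_iff]; exact measure_mono_null (fun x hx => hx) hnot
    have h0 : ∫⁻ x, ENNReal.ofReal (p x) = 0 := by
      rw [lintegral_eq_zero_iff hpm.ennreal_ofReal]
      exact hae.mono fun x hx => by simp [hx]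
    rw [h0] at h2
    exact zero_ne_one h2
  have hL0pos : ∀ t : ℝ, 0 < ∫ x, Real.exp (t * x) * p x := by
    intro t
    rw [integral_pos_iff_support_of_nonneg_ae
      (Filter.Eventually.of_forall fun x => mul_nonneg (Real.exp_pos _).le (hp0 x))
      (auxIntA hpm hp0 hdom t)]
    have hse : (Function.support fun x => Real.exp (t * x) * p x) = Function.support p := by
      ext x
      simp [Function.mem_support, Real.exp_ne_zero]
    rw [hse]; exact hsupp
  have hmgf : ∀ t, mgf X μ t = ∫ x, Real.exp (t * x) * p x := by
    intro t
    calc mgf X μ t = ∫ ω, Real.exp (t * X ω) ∂μ := rfl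
      _ = ∫ x, Real.exp (t * x) ∂(Measure.map X μ) :=
          (integral_map hXm.aemeasurable
            (((Real.continuous_exp.comp (continuous_const.mul continuous_id))).aestronglyMeasurable
              : AEStronglyMeasurable (fun x : ℝ => Real.exp (t * x)) _)).symm
      _ = ∫ x, Real.exp (t * x) ∂(volume.withDensity fun x => ENNReal.ofReal (p x)) := by
          rw [hmap]
      _ = ∫ x, ((fun x => (p x).toNNReal) x) • Real.exp (t * x) :=
          integral_withDensity_eq_integral_smul (hpm.real_toNNReal) _
      _ = ∫ x, Real.exp (t * x) * p x := by
          refine integral_congr_ae (Filter.Eventually.of_forall fun x => ?_)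
          simp [NNReal.smul_def, Real.coe_toNNReal _ (hp0 x), mul_comm]
  have hKeq : K = fun t => Real.log (∫ x, Real.exp (t * x) * p x) := by
    rw [hK]; funext t; rw [hmgf t]
  have hK' : deriv K =
      fun t => (∫ x, Real.exp (t * x) * (x * p x)) / (∫ x, Real.exp (t * x) * p x) := by
    funext t
    rw [hKeq]
    exact (HasDerivAt.log (auxD0 hpm hp0 hdom t) (ne_of_gt (hL0pos t))).deriv
  have hK'' : deriv (deriv K) h =
      ((∫ x, Real.exp (h * x) * (x * (x * p x))) * (∫ x, Real.exp (h * x) * p x)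
        - (∫ x, Real.exp (h * x) * (x * p x)) * (∫ x, Real.exp (h * x) * (x * p x)))
      / (∫ x, Real.exp (h * x) * p x) ^ 2 := by
    rw [hK']
    exact ((auxD1 hpm hp0 hdom h).div (auxD0 hpm hp0 hdom h) (ne_of_gt (hL0pos h))).deriv
  set E0 := ∫ x, Real.exp (h * x) * p x with hE0
  set E1 := ∫ x, Real.exp (h * x) * (x * p x) with hE1
  set E2 := ∫ x, Real.exp (h * x) * (x * (x * p x)) with hE2
  have hE0pos : 0 < E0 := hL0pos h
  have IntA := auxIntA hpm hp0 hdom h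
  have IntB := auxIntB hpm hp0 hdom h
  have IntC := auxIntC hpm hp0 hdom h
  clear_value E0 E1 E2
  set m := E1 / E0 with hm
  clear_value m
  have hfun : (fun x => (x - m) ^ 2 * (Real.exp (h * x) * p x))
      = fun x => (Real.exp (h * x) * (x * (x * p x)) - (2 * m) * (Real.exp (h * x) * (x * p x)))
          + m ^ 2 * (Real.exp (h * x) * p x) := by
    funext x; ring
  have IntW : Integrable (fun x => (x - m) ^ 2 * (Real.exp (h * x) * p x)) := by
    rw [hfun]; exact (IntC.sub (IntB.const_mul _)).add (IntA.const_mul _)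
  have e1 : (∫ x, ((Real.exp (h * x) * (x * (x * p x)) - 2 * m * (Real.exp (h * x) * (x * p x)))
        + m ^ 2 * (Real.exp (h * x) * p x)))
      = (∫ x, (Real.exp (h * x) * (x * (x * p x)) - 2 * m * (Real.exp (h * x) * (x * p x))))
        + ∫ x, m ^ 2 * (Real.exp (h * x) * p x) :=
    integral_add (IntC.sub (IntB.const_mul (2 * m))) (IntA.const_mul (m ^ 2))
  have e2 : (∫ x, (Real.exp (h * x) * (x * (x * p x)) - 2 * m * (Real.exp (h * x) * (x * p x))))
      = (∫ x, Real.exp (h * x) * (x * (x * p x)))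
        - ∫ x, 2 * m * (Real.exp (h * x) * (x * p x)) :=
    integral_sub IntC (IntB.const_mul (2 * m))
  have e3 : (∫ x, 2 * m * (Real.exp (h * x) * (x * p x)))
      = 2 * m * ∫ x, Real.exp (h * x) * (x * p x) :=
    integral_const_mul (2 * m) _
  have e4 : (∫ x, m ^ 2 * (Real.exp (h * x) * p x))
      = m ^ 2 * ∫ x, Real.exp (h * x) * p x :=
    integral_const_mul (m ^ 2) _
  have hW : ∫ x, (x - m) ^ 2 * (Real.exp (h * x) * p x) = E2 - 2 * m * E1 + m ^ 2 * E0 := by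
    rw [hfun, e1, e2, e3, e4, ← hE0, ← hE1, ← hE2]
  have hK''W : deriv (deriv K) h
      = (∫ x, (x - m) ^ 2 * (Real.exp (h * x) * p x)) / E0 := by
    rw [hK'', hW, hm]
    field_simp
    ring
  -- pointwise bound on the tilted (unnormalized) density
  set B := c * Real.exp (h ^ 2 / 2) * (Real.sqrt (2 * Real.pi))⁻¹ with hB
  clear_value B
  have hBpos : 0 < B := by
    rw [hB]
    exact mul_pos (mul_pos hcpos (Real.exp_pos _)) (inv_pos.mpr hsπ)
  have hwB : ∀ᵐ x : ℝ, Real.exp (h * x) * p x ≤ B := by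
    filter_upwards [hdom] with x hx
    have s1 : Real.exp (h * x) * p x ≤ Real.exp (h * x) * (c * stdGauss x) :=
      mul_le_mul_of_nonneg_left hx (Real.exp_pos _).le
    have s2 : Real.exp (h * x) * (c * stdGauss x)
        = c * (Real.sqrt (2 * Real.pi))⁻¹ * Real.exp (h * x + -x ^ 2 / 2) := by
      unfold stdGauss; rw [Real.exp_add]; ring
    have s3 : Real.exp (h * x + -x ^ 2 / 2) ≤ Real.exp (h ^ 2 / 2) :=
      Real.exp_le_exp.mpr (by nlinarith [sq_nonneg (x - h)])
    have s4 : c * (Real.sqrt (2 * Real.pi))⁻¹ * Real.exp (h * x + -x ^ 2 / 2)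
        ≤ c * (Real.sqrt (2 * Real.pi))⁻¹ * Real.exp (h ^ 2 / 2) :=
      mul_le_mul_of_nonneg_left s3 (by positivity)
    rw [hB]; linarith [s2 ▸ s1]
  set r := E0 / (2 * B) with hr
  clear_value r
  have hrpos : 0 < r := by
    rw [hr]
    exact div_pos hE0pos (mul_pos two_pos hBpos)
  -- the comparison function g
  set g : ℝ → ℝ := fun x => Set.indicator (Set.Icc (m - r) (m + r))
      (fun x => B * (x - m) ^ 2 - r ^ 2 * B) x + r ^ 2 * (Real.exp (h * x) * p x) with hg
  clear_value g
  have hcont : Continuous fun x : ℝ => B * (x - m) ^ 2 - r ^ 2 * B := by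
    exact (continuous_const.mul ((continuous_id.sub continuous_const).pow 2)).sub continuous_const
  have hIndInt : Integrable (Set.indicator (Set.Icc (m - r) (m + r))
      (fun x => B * (x - m) ^ 2 - r ^ 2 * B)) :=
    (integrable_indicator_iff measurableSet_Icc).mpr hcont.integrableOn_Icc
  have hgInt : Integrable g := by
    rw [hg]; exact hIndInt.add (IntA.const_mul _)
  have hgle : ∀ᵐ x : ℝ, g x ≤ (x - m) ^ 2 * (Real.exp (h * x) * p x) := by
    filter_upwards [hwB] with x hx
    have hw0 : 0 ≤ Real.exp (h * x) * p x := mul_nonneg (Real.exp_pos _).le (hp0 x)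
    rw [hg]
    simp only
    by_cases hmem : x ∈ Set.Icc (m - r) (m + r)
    · rw [Set.indicator_of_mem hmem]
      obtain ⟨h1, h2⟩ := Set.mem_Icc.mp hmem
      have hsq : (x - m) ^ 2 ≤ r ^ 2 := by nlinarith
      nlinarith [mul_nonneg (sub_nonneg.mpr hsq) (sub_nonneg.mpr hx)]
    · rw [Set.indicator_of_notMem hmem]
      rw [Set.mem_Icc, not_and_or] at hmem
      have hsq : r ^ 2 ≤ (x - m) ^ 2 := by
        rcases hmem with h1 | h1 <;> push_neg at h1 <;> nlinarith
      nlinarith [mul_le_mul_of_nonneg_right hsq hw0]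
  -- integral of the indicator part
  have hIcc : (∫ x, Set.indicator (Set.Icc (m - r) (m + r))
        (fun x => B * (x - m) ^ 2 - r ^ 2 * B) x)
      = B * (2 * r ^ 3 / 3) - (2 * r) * (r ^ 2 * B) := by
    have iA : IntervalIntegrable (fun x : ℝ => B * (x - m) ^ 2) volume (m - r) (m + r) :=
      Continuous.intervalIntegrable (by continuity) _ _
    have iB : IntervalIntegrable (fun _ : ℝ => r ^ 2 * B) volume (m - r) (m + r) :=
      intervalIntegrable_const
    rw [integral_indicator measurableSet_Icc, integral_Icc_eq_integral_Ioc,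
      ← intervalIntegral.integral_of_le (by linarith : m - r ≤ m + r),
      intervalIntegral.integral_sub iA iB,
      intervalIntegral.integral_const, intervalIntegral.integral_const_mul,
      intervalIntegral.integral_comp_sub_right (fun y => y ^ 2) m, integral_pow,
      smul_eq_mul]
    push_cast
    ring
  have hgval : ∫ x, g x = E0 * r ^ 2 / 3 := by
    rw [hg]
    have e5 : (∫ x, (Set.indicator (Set.Icc (m - r) (m + r))
          (fun x => B * (x - m) ^ 2 - r ^ 2 * B) x + r ^ 2 * (Real.exp (h * x) * p x)))
        = (∫ x, Set.indicator (Set.Icc (m - r) (m + r))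
            (fun x => B * (x - m) ^ 2 - r ^ 2 * B) x)
          + ∫ x, r ^ 2 * (Real.exp (h * x) * p x) :=
      integral_add hIndInt (IntA.const_mul (r ^ 2))
    have e6 : (∫ x, r ^ 2 * (Real.exp (h * x) * p x))
        = r ^ 2 * ∫ x, Real.exp (h * x) * p x := integral_const_mul (r ^ 2) _
    rw [e5, e6, hIcc, ← hE0, hr]
    field_simp
    ring
  have hWlb : E0 * r ^ 2 / 3 ≤ ∫ x, (x - m) ^ 2 * (Real.exp (h * x) * p x) := by
    rw [← hgval]
    exact integral_mono_ae hgInt IntW hgle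
  -- final arithmetic
  have hKh : K h = Real.log E0 := by simp only [hKeq, hE0]
  have hexpA : Real.exp (-A h) = E0 * Real.exp (-(h ^ 2) / 2) := by
    rw [hA]
    simp only
    rw [show -(h ^ 2 / 2 - K h) = K h + -(h ^ 2) / 2 by ring, Real.exp_add, hKh,
      Real.exp_log hE0pos]
  have hmain : Real.pi / (6 * c ^ 2) * (Real.exp (-A h)) ^ 2 ≤ deriv (deriv K) h := by
    rw [hK''W, hexpA]
    have hsq2 : Real.sqrt (2 * Real.pi) ^ 2 = 2 * Real.pi :=
      Real.sq_sqrt (by positivity)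
    have hexppos : (0:ℝ) < Real.exp (h ^ 2 / 2) := Real.exp_pos _
    have hB2 : B ^ 2 = c ^ 2 * Real.exp (h ^ 2 / 2) ^ 2 / (2 * Real.pi) := by
      rw [hB, mul_pow, mul_pow, inv_pow, hsq2]
      ring
    have hq : Real.pi / (6 * c ^ 2) * (E0 * Real.exp (-(h ^ 2) / 2)) ^ 2 = E0 * r ^ 2 / 3 / E0 := by
      rw [show (-(h ^ 2) / 2 : ℝ) = -(h ^ 2 / 2) by ring, Real.exp_neg, hr, div_pow, mul_pow, mul_pow 2 B, hB2]
      field_simp [hcpos.ne', hexppos.ne', Real.pi_ne_zero, hE0pos.ne']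
      ring
    rw [hq]
    gcongr
  have h1 : Real.sqrt (Real.pi / (6 * c ^ 2)) * Real.exp (-A h)
      = Real.sqrt (Real.pi / (6 * c ^ 2) * (Real.exp (-A h)) ^ 2) := by
    rw [Real.sqrt_mul (by positivity), Real.sqrt_sq (Real.exp_nonneg _)]
  rw [h1]
  exact Real.sqrt_le_sqrt hmain
end

section
/- Let X = c₀η₀ + c₁η₁ + c₂η₂, where c₀² + c₁² + c₂² = 1 and c₁, c₂ > 0, the random variables η₀, η₁, η₂ are independent, η₀ is strictly subgaussian with Var(η₀) = 1, and η₁, η₂ have densities q₁, q₂ satisfying q_k(x) ≤ M_k φ(x) for all x ∈ ℝ (k = 1, 2) with constants M₁, M₂. Then X has a density p satisfying p(x) ≤ M φ(x) for all x ∈ ℝ, with M = M₁ M₂ / √(2 c₁ c₂). -/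
open MeasureTheory ProbabilityTheory Filter Real

/-- Change of variables `x = c·w + b` for Lebesgue lower integrals on `ℝ`. -/
lemma cv_lintegral {c : ℝ} (hc : c ≠ 0) (b : ℝ) {f : ℝ → ENNReal} (hf : Measurable f) :
    ∫⁻ w, f (c * w + b) = ENNReal.ofReal |c|⁻¹ * ∫⁻ x, f x := by
  have hmap : Measure.map (fun w => c * w + b) volume
      = ENNReal.ofReal |c⁻¹| • (volume : Measure ℝ) := by
    have h1 : (fun w : ℝ => c * w + b) = (fun x : ℝ => x + b) ∘ (fun w : ℝ => c * w) := by
      funext w; simp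
    rw [h1, ← Measure.map_map (by fun_prop) (by fun_prop)]
    rw [Real.map_volume_mul_left hc, Measure.map_smul, map_add_right_eq_self]
  calc ∫⁻ w, f (c * w + b)
      = ∫⁻ x, f x ∂(Measure.map (fun w => c * w + b) volume) := by
        rw [lintegral_map hf (by fun_prop)]
    _ = ENNReal.ofReal |c|⁻¹ * ∫⁻ x, f x := by
        rw [hmap, lintegral_smul_measure, abs_inv, smul_eq_mul]

/-- Shifted Gaussian integral. -/
lemma gauss_shift {b : ℝ} (m : ℝ) :
    ∫ v : ℝ, Real.exp (-b * (v - m) ^ 2) = Real.sqrt (π / b) := by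
  rw [← integral_gaussian b]
  have := integral_add_right_eq_self (μ := (volume : Measure ℝ))
    (fun v : ℝ => Real.exp (-b * v ^ 2)) (-m)
  simpa [sub_eq_add_neg] using this

lemma integrable_gauss_shift {b : ℝ} (hb : 0 < b) (m : ℝ) :
    Integrable (fun v : ℝ => Real.exp (-b * (v - m) ^ 2)) := by
  have := (integrable_exp_neg_mul_sq hb).comp_sub_right m
  simpa using this

/-- Lemma 11.4: if `X = c₀η₀ + c₁η₁ + c₂η₂` with `c₀² + c₁² + c₂² = 1`,
`c₁, c₂ > 0`, where `η₀, η₁, η₂` are independent, `η₀` is strictly subgaussian with variance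
one, and `η₁, η₂` have densities `q₁, q₂` with `q_k ≤ M_k φ` pointwise, then `X` has a
density `p` with `p ≤ M φ` pointwise, where `M = M₁M₂/√(2c₁c₂)`. -/
theorem renyi_clt_stmt_16
    {Ω : Type*} [MeasurableSpace Ω] (μ : Measure Ω) [IsProbabilityMeasure μ]
    (η : Fin 3 → Ω → ℝ)
    (hmeas : ∀ i, Measurable (η i))
    (hindep : iIndepFun η μ)
    (hmean0 : ∫ ω, η 0 ω ∂μ = 0) (hvar0 : variance (η 0) μ = 1)
    (hint0 : ∀ t : ℝ, Integrable (fun ω => Real.exp (t * η 0 ω)) μ)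
    (hstrict0 : ∀ t : ℝ, mgf (η 0) μ t ≤ Real.exp (t ^ 2 / 2))
    (q₁ q₂ : ℝ → ℝ) (hq₁ : HasDensityOn μ (η 1) q₁) (hq₂ : HasDensityOn μ (η 2) q₂)
    (M₁ M₂ : ℝ)
    (hM₁ : ∀ x : ℝ, q₁ x ≤ M₁ * stdGauss x) (hM₂ : ∀ x : ℝ, q₂ x ≤ M₂ * stdGauss x)
    (c₀ c₁ c₂ : ℝ) (hc : c₀ ^ 2 + c₁ ^ 2 + c₂ ^ 2 = 1) (hc₁ : 0 < c₁) (hc₂ : 0 < c₂)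
    (X : Ω → ℝ) (hX : X = fun ω => c₀ * η 0 ω + c₁ * η 1 ω + c₂ * η 2 ω) :
    ∃ p : ℝ → ℝ, HasDensityOn μ X p ∧
      ∀ x : ℝ, p x ≤ M₁ * M₂ / Real.sqrt (2 * c₁ * c₂) * stdGauss x := by
  obtain ⟨hη1m, hq1m, hq1nn, hq1d⟩ := hq₁
  obtain ⟨hη2m, hq2m, hq2nn, hq2d⟩ := hq₂
  set s : ℝ := c₁ ^ 2 + c₂ ^ 2 with hs
  clear_value s
  have hspos : 0 < s := by rw [hs]; positivity
  have hc₀sq : c₀ ^ 2 = 1 - s := by rw [hs]; linarith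
  have h2c : 2 * c₁ * c₂ ≤ s := by rw [hs]; nlinarith [sq_nonneg (c₁ - c₂)]
  have hφpos : ∀ x : ℝ, 0 < stdGauss x := by
    intro x; unfold stdGauss
    have h2π : (0:ℝ) < 2 * π := by positivity
    positivity
  have hM₁0 : 0 ≤ M₁ := by
    have h1 := (hq1nn 0).trans (hM₁ 0)
    have h2 := hφpos 0
    nlinarith
  have hM₂0 : 0 ≤ M₂ := by
    have h1 := (hq2nn 0).trans (hM₂ 0)
    have h2 := hφpos 0
    nlinarith
  set ν₀ : Measure ℝ := μ.map (η 0) with hν₀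
  set ν₁ : Measure ℝ := μ.map (η 1) with hν₁
  set ν₂ : Measure ℝ := μ.map (η 2) with hν₂
  haveI : IsProbabilityMeasure ν₀ := Measure.isProbabilityMeasure_map (hmeas 0).aemeasurable
  haveI : IsProbabilityMeasure ν₁ := Measure.isProbabilityMeasure_map (hmeas 1).aemeasurable
  haveI : IsProbabilityMeasure ν₂ := Measure.isProbabilityMeasure_map (hmeas 2).aemeasurable
  set g₁ : ℝ → ENNReal := fun v => ENNReal.ofReal (q₁ v) with hg₁
  set g₂ : ℝ → ENNReal := fun w => ENNReal.ofReal (q₂ w) with hg₂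
  have hg₁m : Measurable g₁ := ENNReal.measurable_ofReal.comp hq1m
  have hg₂m : Measurable g₂ := ENNReal.measurable_ofReal.comp hq2m
  set H : ℝ → ENNReal :=
    fun z => ∫⁻ v, ENNReal.ofReal c₂⁻¹ * g₂ ((z - c₁ * v) / c₂) ∂ν₁ with hH
  have hHinner : Measurable (fun zv : ℝ × ℝ =>
      ENNReal.ofReal c₂⁻¹ * g₂ ((zv.1 - c₁ * zv.2) / c₂)) := by fun_prop
  have hHmeas : Measurable H := Measurable.lintegral_prod_right' hHinner
  set P : ℝ → ENNReal := fun x => ∫⁻ u, H (x - c₀ * u) ∂ν₀ with hP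
  have hPmeas : Measurable P :=
    Measurable.lintegral_prod_right' (f := fun xu : ℝ × ℝ => H (xu.1 - c₀ * xu.2))
      (hHmeas.comp (by fun_prop))
  have hmapP : μ.map X = volume.withDensity P := by
    have hind12' : IndepFun (η 1) (η 2) μ := hindep.indepFun (by decide)
    have hind012 : IndepFun (η 0) (fun ω => (η 1 ω, η 2 ω)) μ :=
      (hindep.indepFun_prodMk hmeas 1 2 0 (by decide) (by decide)).symm
    have hmap12 : μ.map (fun ω => (η 1 ω, η 2 ω)) = ν₁.prod ν₂ :=
      (indepFun_iff_map_prod_eq_prod_map_map (hmeas 1).aemeasurable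
        (hmeas 2).aemeasurable).1 hind12'
    have htriple : μ.map (fun ω => (η 0 ω, (η 1 ω, η 2 ω))) = ν₀.prod (ν₁.prod ν₂) := by
      rw [(indepFun_iff_map_prod_eq_prod_map_map (hmeas 0).aemeasurable
          ((hmeas 1).prodMk (hmeas 2)).aemeasurable).1 hind012, hmap12]
    have hTm : Measurable (fun t : ℝ × ℝ × ℝ => c₀ * t.1 + c₁ * t.2.1 + c₂ * t.2.2) := by
      fun_prop
    have hXmap : μ.map X
        = (ν₀.prod (ν₁.prod ν₂)).map (fun t : ℝ × ℝ × ℝ => c₀ * t.1 + c₁ * t.2.1 + c₂ * t.2.2) := by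
      have hXT : X = (fun t : ℝ × ℝ × ℝ => c₀ * t.1 + c₁ * t.2.1 + c₂ * t.2.2) ∘
          (fun ω => (η 0 ω, (η 1 ω, η 2 ω))) := by
        funext ω; simp [hX]
      rw [hXT, ← Measure.map_map hTm (by fun_prop), htriple]
    refine Measure.ext fun A hA => ?_
    have hindm : Measurable (A.indicator (1 : ℝ → ENNReal)) := measurable_one.indicator hA
    rw [hXmap, Measure.map_apply hTm hA, withDensity_apply _ hA]
    have hFm : Measurable (fun t : ℝ × ℝ × ℝ =>
        A.indicator (1 : ℝ → ENNReal) (c₀ * t.1 + c₁ * t.2.1 + c₂ * t.2.2)) := hindm.comp hTm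
    have step1 : (ν₀.prod (ν₁.prod ν₂))
          ((fun t : ℝ × ℝ × ℝ => c₀ * t.1 + c₁ * t.2.1 + c₂ * t.2.2) ⁻¹' A)
        = ∫⁻ u, ∫⁻ v, ∫⁻ w, A.indicator 1 (c₀ * u + c₁ * v + c₂ * w) ∂ν₂ ∂ν₁ ∂ν₀ := by
      rw [← lintegral_indicator_one (hA.preimage hTm)]
      have hieq : (fun t : ℝ × ℝ × ℝ =>
            ((fun t : ℝ × ℝ × ℝ => c₀ * t.1 + c₁ * t.2.1 + c₂ * t.2.2) ⁻¹' A).indicator 1 t)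
          = fun t : ℝ × ℝ × ℝ =>
            A.indicator (1 : ℝ → ENNReal) (c₀ * t.1 + c₁ * t.2.1 + c₂ * t.2.2) := by
        funext t
        by_cases h : c₀ * t.1 + c₁ * t.2.1 + c₂ * t.2.2 ∈ A <;>
          simp [Set.indicator_apply, Set.mem_preimage, h]
      rw [hieq, lintegral_prod _ hFm.aemeasurable]
      congr 1; funext u
      exact lintegral_prod _ (hindm.comp (by fun_prop)).aemeasurable
    have step2 : ∀ u v : ℝ, ∫⁻ w, A.indicator 1 (c₀ * u + c₁ * v + c₂ * w) ∂ν₂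
        = ∫⁻ x, A.indicator 1 x * (ENNReal.ofReal c₂⁻¹ * g₂ ((x - c₀ * u - c₁ * v) / c₂)) := by
      intro u v
      have hm2 : Measurable fun w : ℝ =>
          A.indicator (1 : ℝ → ENNReal) (c₀ * u + c₁ * v + c₂ * w) := hindm.comp (by fun_prop)
      rw [hq2d, lintegral_withDensity_eq_lintegral_mul _ hg₂m hm2]
      simp only [Pi.mul_apply]
      have heq : (fun w : ℝ => g₂ w * A.indicator 1 (c₀ * u + c₁ * v + c₂ * w))
          = fun w => (fun x => g₂ ((x - (c₀ * u + c₁ * v)) / c₂) * A.indicator 1 x)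
              (c₂ * w + (c₀ * u + c₁ * v)) := by
        funext w
        show g₂ w * A.indicator 1 (c₀ * u + c₁ * v + c₂ * w)
          = g₂ ((c₂ * w + (c₀ * u + c₁ * v) - (c₀ * u + c₁ * v)) / c₂) *
              A.indicator 1 (c₂ * w + (c₀ * u + c₁ * v))
        rw [show (c₂ * w + (c₀ * u + c₁ * v) - (c₀ * u + c₁ * v)) / c₂ = w by field_simp; ring,
          show c₂ * w + (c₀ * u + c₁ * v) = c₀ * u + c₁ * v + c₂ * w by ring]
      have hfm : Measurable fun x : ℝ =>
          g₂ ((x - (c₀ * u + c₁ * v)) / c₂) * A.indicator 1 x :=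
        (hg₂m.comp (by fun_prop)).mul hindm
      rw [heq, cv_lintegral hc₂.ne' _ hfm, ← lintegral_const_mul _ hfm]
      congr 1; funext x
      rw [abs_of_pos hc₂, sub_sub]
      ring
    have swap1 : ∀ u : ℝ,
        ∫⁻ v, ∫⁻ x, A.indicator 1 x *
            (ENNReal.ofReal c₂⁻¹ * g₂ ((x - c₀ * u - c₁ * v) / c₂)) ∂volume ∂ν₁
        = ∫⁻ x, A.indicator 1 x * H (x - c₀ * u) ∂volume := by
      intro u
      rw [lintegral_lintegral_swap]
      · congr 1; funext x
        rw [lintegral_const_mul _ (by fun_prop)]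
      · exact ((hindm.comp measurable_snd).mul
          ((measurable_const.mul (hg₂m.comp (by fun_prop))))).aemeasurable
    have swap2 : ∫⁻ u, ∫⁻ x, A.indicator 1 x * H (x - c₀ * u) ∂volume ∂ν₀
        = ∫⁻ x, A.indicator 1 x * P x ∂volume := by
      rw [lintegral_lintegral_swap]
      · congr 1; funext x
        have hm3 : Measurable fun u : ℝ => H (x - c₀ * u) := hHmeas.comp (by fun_prop)
        rw [lintegral_const_mul _ hm3]
      · exact ((hindm.comp measurable_snd).mul
          (hHmeas.comp (by fun_prop))).aemeasurable
    calc (ν₀.prod (ν₁.prod ν₂))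
          ((fun t : ℝ × ℝ × ℝ => c₀ * t.1 + c₁ * t.2.1 + c₂ * t.2.2) ⁻¹' A)
        = ∫⁻ u, ∫⁻ v, ∫⁻ w, A.indicator 1 (c₀ * u + c₁ * v + c₂ * w) ∂ν₂ ∂ν₁ ∂ν₀ := step1
      _ = ∫⁻ u, ∫⁻ v, ∫⁻ x, A.indicator 1 x *
            (ENNReal.ofReal c₂⁻¹ * g₂ ((x - c₀ * u - c₁ * v) / c₂)) ∂volume ∂ν₁ ∂ν₀ := by
          congr 1; funext u; congr 1; funext v; exact step2 u v
      _ = ∫⁻ u, ∫⁻ x, A.indicator 1 x * H (x - c₀ * u) ∂volume ∂ν₀ := by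
          congr 1; funext u; exact swap1 u
      _ = ∫⁻ x, A.indicator 1 x * P x ∂volume := swap2
      _ = ∫⁻ x in A, P x := by
          rw [← lintegral_indicator hA]
          congr 1; funext x
          by_cases h : x ∈ A <;> simp [Set.indicator_apply, h]
  have hφnn : ∀ y : ℝ, 0 ≤ stdGauss y := fun y => by
    unfold stdGauss; positivity
  have hPbound : ∀ x : ℝ, P x ≤
      ENNReal.ofReal (M₁ * M₂ / Real.sqrt (2 * c₁ * c₂) * stdGauss x) := by
    have hsqrt2πs : (0:ℝ) < Real.sqrt (2 * π * s) := Real.sqrt_pos.2 (by positivity)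
    set C : ℝ := M₁ * M₂ / Real.sqrt (2 * π * s) with hC
    have hC0 : 0 ≤ C := by positivity
    -- bound on H
    have hHb : ∀ z : ℝ, H z ≤ ENNReal.ofReal (C * Real.exp (-z ^ 2 / (2 * s))) := by
      intro z
      set b : ℝ := s / (2 * c₂ ^ 2) with hb
      have hbpos : 0 < b := by positivity
      set m : ℝ := c₁ * z / s with hm
      set D : ℝ := M₁ * M₂ * c₂⁻¹ * (2 * π)⁻¹ * Real.exp (-z ^ 2 / (2 * s)) with hD
      have hinnerm : Measurable fun v : ℝ =>
          ENNReal.ofReal c₂⁻¹ * g₂ ((z - c₁ * v) / c₂) := by fun_prop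
      have hHz : H z = ∫⁻ v, g₁ v * (ENNReal.ofReal c₂⁻¹ * g₂ ((z - c₁ * v) / c₂)) ∂volume := by
        show (∫⁻ v, ENNReal.ofReal c₂⁻¹ * g₂ ((z - c₁ * v) / c₂) ∂ν₁) = _
        rw [hq1d, lintegral_withDensity_eq_lintegral_mul _ hg₁m hinnerm]
        rfl
      have hpt : ∀ v : ℝ, g₁ v * (ENNReal.ofReal c₂⁻¹ * g₂ ((z - c₁ * v) / c₂))
          ≤ ENNReal.ofReal (D * Real.exp (-b * (v - m) ^ 2)) := by
        intro v
        have h0 : g₁ v * (ENNReal.ofReal c₂⁻¹ * g₂ ((z - c₁ * v) / c₂))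
            = ENNReal.ofReal (q₁ v * (c₂⁻¹ * q₂ ((z - c₁ * v) / c₂))) := by
          rw [ENNReal.ofReal_mul (hq1nn v),
            ENNReal.ofReal_mul (by positivity : (0:ℝ) ≤ c₂⁻¹)]
        have h1 : g₁ v * (ENNReal.ofReal c₂⁻¹ * g₂ ((z - c₁ * v) / c₂))
            ≤ ENNReal.ofReal ((M₁ * stdGauss v) *
                (c₂⁻¹ * (M₂ * stdGauss ((z - c₁ * v) / c₂)))) := by
          rw [h0]
          apply ENNReal.ofReal_le_ofReal
          apply mul_le_mul (hM₁ v) ?_ ?_ (mul_nonneg hM₁0 (hφnn v))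
          · exact mul_le_mul_of_nonneg_left (hM₂ _) (by positivity)
          · exact mul_nonneg (by positivity) (hq2nn _)
        refine h1.trans (ENNReal.ofReal_le_ofReal (le_of_eq ?_))
        unfold stdGauss
        have hsne : s ≠ 0 := hspos.ne'
        have hexp : -v ^ 2 / 2 + -((z - c₁ * v) / c₂) ^ 2 / 2
            = -z ^ 2 / (2 * s) + -b * (v - m) ^ 2 := by
          rw [hb, hm, hs]
          field_simp
          ring
        have hG : Real.sqrt (2 * π) * Real.sqrt (2 * π) = 2 * π :=
          Real.mul_self_sqrt (by positivity)
        rw [hD]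
        rw [show M₁ * ((Real.sqrt (2 * π))⁻¹ * Real.exp (-v ^ 2 / 2)) *
              (c₂⁻¹ * (M₂ * ((Real.sqrt (2 * π))⁻¹ * Real.exp (-((z - c₁ * v) / c₂) ^ 2 / 2))))
            = M₁ * M₂ * c₂⁻¹ * ((Real.sqrt (2 * π)) * (Real.sqrt (2 * π)))⁻¹ *
              (Real.exp (-v ^ 2 / 2) * Real.exp (-((z - c₁ * v) / c₂) ^ 2 / 2)) from by ring]
        rw [hG, ← Real.exp_add, hexp, Real.exp_add]
        ring
      calc H z = ∫⁻ v, g₁ v * (ENNReal.ofReal c₂⁻¹ * g₂ ((z - c₁ * v) / c₂)) ∂volume := hHz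
        _ ≤ ∫⁻ v, ENNReal.ofReal (D * Real.exp (-b * (v - m) ^ 2)) ∂volume :=
            lintegral_mono fun v => hpt v
        _ = ENNReal.ofReal (∫ v, D * Real.exp (-b * (v - m) ^ 2)) := by
            rw [← ofReal_integral_eq_lintegral_ofReal
              ((integrable_gauss_shift hbpos m).const_mul D)
              (Filter.Eventually.of_forall fun v => by positivity)]
        _ = ENNReal.ofReal (D * Real.sqrt (π / b)) := by
            rw [integral_const_mul, gauss_shift]
        _ = ENNReal.ofReal (C * Real.exp (-z ^ 2 / (2 * s))) := by
            congr 1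
            rw [hD, hb, hC]
            have h2 : π / (s / (2 * c₂ ^ 2))
                = (c₂ * (2 * π) / Real.sqrt (2 * π * s)) ^ 2 := by
              rw [div_pow, mul_pow, Real.sq_sqrt (by positivity)]
              field_simp
            rw [h2, Real.sqrt_sq (by positivity)]
            field_simp
    -- now the u-integral
    intro x
    have hHxu : ∀ u : ℝ, H (x - c₀ * u) ≤
        ENNReal.ofReal (C * Real.exp (-x ^ 2 + s * x ^ 2 / 2)) *
          ENNReal.ofReal (Real.exp (x * c₀ * u)) := by
      intro u
      refine (hHb (x - c₀ * u)).trans ?_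
      rw [← ENNReal.ofReal_mul (by positivity)]
      apply ENNReal.ofReal_le_ofReal
      rw [mul_assoc, ← Real.exp_add]
      refine mul_le_mul_of_nonneg_left ?_ hC0
      apply Real.exp_le_exp.2
      rw [div_le_iff₀ (by positivity : (0:ℝ) < 2 * s)]
      have key : (-x ^ 2 + s * x ^ 2 / 2 + x * c₀ * u) * (2 * s) - (-(x - c₀ * u) ^ 2)
          = (x - c₀ * u - s * x) ^ 2 := by ring
      linarith [sq_nonneg (x - c₀ * u - s * x), key]
    calc P x = ∫⁻ u, H (x - c₀ * u) ∂ν₀ := rfl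
      _ ≤ ∫⁻ u, ENNReal.ofReal (C * Real.exp (-x ^ 2 + s * x ^ 2 / 2)) *
            ENNReal.ofReal (Real.exp (x * c₀ * u)) ∂ν₀ := lintegral_mono hHxu
      _ = ENNReal.ofReal (C * Real.exp (-x ^ 2 + s * x ^ 2 / 2)) *
            ∫⁻ u, ENNReal.ofReal (Real.exp (x * c₀ * u)) ∂ν₀ :=
          lintegral_const_mul _ (by fun_prop)
      _ = ENNReal.ofReal (C * Real.exp (-x ^ 2 + s * x ^ 2 / 2)) *
            ENNReal.ofReal (mgf (η 0) μ (x * c₀)) := by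
          congr 1
          rw [hν₀, lintegral_map (by fun_prop) (hmeas 0),
            ← ofReal_integral_eq_lintegral_ofReal (hint0 (x * c₀))
              (Filter.Eventually.of_forall fun ω => (Real.exp_pos _).le)]
          rfl
      _ ≤ ENNReal.ofReal (C * Real.exp (-x ^ 2 + s * x ^ 2 / 2)) *
            ENNReal.ofReal (Real.exp ((x * c₀) ^ 2 / 2)) :=
          mul_le_mul' le_rfl (ENNReal.ofReal_le_ofReal (hstrict0 (x * c₀)))
      _ = ENNReal.ofReal (C * Real.exp (-x ^ 2 / 2)) := by
          rw [← ENNReal.ofReal_mul (by positivity), mul_assoc, ← Real.exp_add]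
          have hexp2 : (-x ^ 2 + s * x ^ 2 / 2) + (x * c₀) ^ 2 / 2 = -x ^ 2 / 2 := by
            linear_combination (x ^ 2 / 2) * hc₀sq
          rw [hexp2]
      _ ≤ ENNReal.ofReal (M₁ * M₂ / Real.sqrt (2 * c₁ * c₂) * stdGauss x) := by
          apply ENNReal.ofReal_le_ofReal
          unfold stdGauss
          have hsc : (0:ℝ) < Real.sqrt (2 * c₁ * c₂) := Real.sqrt_pos.2 (by positivity)
          have hsπ : (0:ℝ) < Real.sqrt (2 * π) := Real.sqrt_pos.2 (by positivity)
          have hAB : Real.sqrt (2 * c₁ * c₂) * Real.sqrt (2 * π) ≤ Real.sqrt (2 * π * s) := by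
            rw [← Real.sqrt_mul (by positivity)]
            apply Real.sqrt_le_sqrt
            nlinarith [Real.pi_pos]
          have hCle : C ≤ M₁ * M₂ / (Real.sqrt (2 * c₁ * c₂) * Real.sqrt (2 * π)) := by
            rw [hC]
            gcongr
            all_goals first
              | exact mul_pos hsc hsπ
              | exact hAB
              | exact mul_nonneg hM₁0 hM₂0
          calc C * Real.exp (-x ^ 2 / 2)
              ≤ M₁ * M₂ / (Real.sqrt (2 * c₁ * c₂) * Real.sqrt (2 * π)) *
                Real.exp (-x ^ 2 / 2) :=
                mul_le_mul_of_nonneg_right hCle (Real.exp_pos _).le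
            _ = M₁ * M₂ / Real.sqrt (2 * c₁ * c₂) *
                ((Real.sqrt (2 * π))⁻¹ * Real.exp (-x ^ 2 / 2)) := by
                field_simp
  -- conclusion
  have hPne : ∀ x, P x ≠ ⊤ := fun x =>
    ((hPbound x).trans_lt ENNReal.ofReal_lt_top).ne
  refine ⟨fun x => (P x).toReal, ⟨?_, ?_, ?_, ?_⟩, ?_⟩
  · rw [hX]; fun_prop
  · exact hPmeas.ennreal_toReal
  · intro x; exact ENNReal.toReal_nonneg
  · rw [hmapP]; congr 1; funext x; exact (ENNReal.ofReal_toReal (hPne x)).symm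
  · intro x
    refine ENNReal.toReal_le_of_le_ofReal ?_ (hPbound x)
    have h1 := (hφpos x).le
    positivity
end
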